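/- arXiv:2309.09345 — 2 statements merged into one kernel-verified Lean document; each statement's English description precedes it below -/
import Mathlib

section
/- In a minimum counterexample G ∈ S_{1,3} to the 2-Decomposition Conjecture, no two vertices of degree 2 are adjacent. -/
/-- A loopless multigraph: an edge type `E` with an endpoint map into unordered
pairs of distinct vertices. Parallel edges are allowed. -/
structure Multigraph (V E : Type) where
  ends : E → Sym2 V
  loopless : ∀ e, ¬ (ends e).IsDiag

namespace Multigraph

variable {V E : Type}

/-- Adjacency via an edge belonging to the edge subset `S`. -/
def AdjOn (G : Multigraph V E) (S : Set E) (u v : V) : Prop :=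
  ∃ e ∈ S, G.ends e = s(u, v)

/-- Adjacency in `G`. -/
def Adj (G : Multigraph V E) (u v : V) : Prop := G.AdjOn Set.univ u v

/-- The spanning subgraph with edge set `S` is connected. -/
def ConnOn (G : Multigraph V E) (S : Set E) : Prop :=
  Nonempty V ∧ ∀ u v : V, Relation.ReflTransGen (G.AdjOn S) u v

/-- `G` is connected. -/
def Connected (G : Multigraph V E) : Prop := G.ConnOn Set.univ

/-- The degree of a vertex: the number of edges incident to it. -/
noncomputable def deg (G : Multigraph V E) (v : V) : ℕ :=
  Nat.card {e : E // v ∈ G.ends e}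

/-- A cycle in `G`, given as a list of (vertex, edge) pairs: the vertices are
distinct, the edges are distinct, there are at least two of them (so pairs of
parallel edges count as cycles), and the `i`-th edge joins the `i`-th vertex to
the next one (cyclically). -/
def IsCycle (G : Multigraph V E) (c : List (V × E)) : Prop :=
  (c.map Prod.fst).Nodup ∧ (c.map Prod.snd).Nodup ∧ 2 ≤ c.length ∧
  ∀ i : Fin c.length,
    G.ends (c.get i).2 =
      s((c.get i).1, (c.get ⟨(i + 1) % c.length, Nat.mod_lt _ i.pos⟩).1)

/-- Every cycle of `G` is separating: deleting its edges disconnects `G`. -/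
def Separating (G : Multigraph V E) : Prop :=
  ∀ c : List (V × E), G.IsCycle c → ¬ G.ConnOn {e | e ∉ c.map Prod.snd}

/-- The class `S_{1,3}`: connected, every cycle separating, degrees in `{1,2,3}`. -/
def S13 (G : Multigraph V E) : Prop :=
  G.Connected ∧ (∀ v, 1 ≤ G.deg v ∧ G.deg v ≤ 3) ∧ G.Separating

/-- The edge set `T` is a spanning tree of `G`. -/
def IsTreeSet (G : Multigraph V E) (T : Set E) : Prop :=
  G.ConnOn T ∧ ¬ ∃ c, G.IsCycle c ∧ ∀ p ∈ c, p.2 ∈ T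

/-- The edge set `M` is a matching of `G`. -/
def IsMatchingSet (G : Multigraph V E) (M : Set E) : Prop :=
  ∀ e ∈ M, ∀ f ∈ M, e ≠ f → ∀ v : V, ¬ (v ∈ G.ends e ∧ v ∈ G.ends f)

/-- `G` decomposes into a spanning tree and a matching. -/
def HasTM (G : Multigraph V E) : Prop :=
  ∃ T M : Set E, T ∪ M = Set.univ ∧ Disjoint T M ∧
    G.IsTreeSet T ∧ G.IsMatchingSet M

/-- The parameter `φ(G) = |V(G)| + |E(G)|`. -/
noncomputable def phi (G : Multigraph V E) : ℕ := Nat.card V + Nat.card E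

/-- `G` is a minimum counterexample (w.r.t. `φ`) to the statement that every
graph in `S_{1,3}` decomposes into a spanning tree and a matching. -/
def MinCex (G : Multigraph V E) : Prop :=
  G.S13 ∧ ¬ G.HasTM ∧
  ∀ (W F : Type), Finite W → Finite F → ∀ H : Multigraph W F,
    H.S13 → ¬ H.HasTM → G.phi ≤ H.phi

end Multigraph

namespace Multigraph

variable {V E : Type}

lemma list_getElem_congr {α : Type*} {l : List α} {i j : ℕ} (h : i = j) (hi : i < l.length) :
    l[i]'hi = l[j]'(h ▸ hi) := by subst h; rfl

lemma isCycle_def {G : Multigraph V E} {l : List (V × E)} :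
    G.IsCycle l ↔ (l.map Prod.fst).Nodup ∧ (l.map Prod.snd).Nodup ∧ 2 ≤ l.length ∧
      ∀ (n : ℕ) (hn : n < l.length) (hm : (n+1) % l.length < l.length),
        G.ends (l[n]).2 = s((l[n]).1, (l[(n+1) % l.length]).1) := by
  unfold IsCycle
  refine and_congr_right fun _ => and_congr_right fun _ => and_congr_right fun h3 => ?_
  constructor
  · intro h4 n hn hm
    have := h4 ⟨n, hn⟩
    simpa using this
  · intro h i
    have := h ↑i i.isLt (Nat.mod_lt _ i.pos)
    simpa using this

lemma sym2_exists (z : Sym2 V) : ∃ p q : V, z = s(p,q) := by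
  induction z using Sym2.ind with
  | _ p q => exact ⟨p, q, rfl⟩

lemma two_edges [Finite E] {G : Multigraph V E} {x : V} {g : E}
    (hdeg : G.deg x = 2) (hg : x ∈ G.ends g) :
    ∃ g', g' ≠ g ∧ x ∈ G.ends g' ∧ ∀ f, x ∈ G.ends f → f = g ∨ f = g' := by
  have h2 : ({f | x ∈ G.ends f} : Set E).ncard = 2 := by
    rw [← Nat.card_coe_set_eq]; exact hdeg
  obtain ⟨a, b, hab, hs⟩ := Set.ncard_eq_two.mp h2
  have hgm : g ∈ ({a, b} : Set E) := hs ▸ hg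
  rcases hgm with rfl | rfl
  · refine ⟨b, fun h => hab h.symm, ?_, fun f hf => ?_⟩
    · have : b ∈ ({g, b} : Set E) := by simp
      rw [← hs] at this; exact this
    · have : f ∈ ({g, b} : Set E) := hs ▸ hf
      simpa using this
  · refine ⟨a, hab, ?_, fun f hf => ?_⟩
    · have : a ∈ ({a, g} : Set E) := by simp
      rw [← hs] at this; exact this
    · have : f ∈ ({a, g} : Set E) := hs ▸ hf
      rcases this with h | h
      · exact Or.inr h
      · exact Or.inl h

lemma IsCycle.rotate {G : Multigraph V E} {c : List (V × E)} (h : G.IsCycle c) (k : ℕ) :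
    G.IsCycle (c.rotate k) := by
  obtain ⟨h1, h2, h3, h4⟩ := h
  have hlen : (c.rotate k).length = c.length := c.length_rotate k
  refine ⟨?_, ?_, ?_, ?_⟩
  · rw [List.map_rotate]; exact List.nodup_rotate.mpr h1
  · rw [List.map_rotate]; exact List.nodup_rotate.mpr h2
  · omega
  · intro i
    rw [List.get_rotate, List.get_rotate]
    have hidx : ((↑i + 1) % (c.rotate k).length + k) % c.length
        = ((↑i + k) % c.length + 1) % c.length := by
      generalize (↑i : ℕ) = m
      rw [hlen, Nat.mod_add_mod, Nat.mod_add_mod]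
      congr 1
      omega
    simp only [hidx]
    exact h4 ⟨(↑i + k) % c.length, Nat.mod_lt _ (by omega)⟩

lemma cycle_edges_at {G : Multigraph V E} {c : List (V × E)} (h : G.IsCycle c)
    (i : Fin c.length) :
    ∃ f f' : E, f ≠ f' ∧ f ∈ c.map Prod.snd ∧ f' ∈ c.map Prod.snd ∧
      (c.get i).1 ∈ G.ends f ∧ (c.get i).1 ∈ G.ends f' := by
  obtain ⟨h1, h2, h3, h4⟩ := h
  have hnpos : 0 < c.length := by omega
  have hjlt : (↑i + (c.length - 1)) % c.length < c.length := Nat.mod_lt _ hnpos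
  have hji : ((↑i + (c.length - 1)) % c.length + 1) % c.length = ↑i := by
    rw [Nat.mod_add_mod]
    have e1 : ↑i + (c.length - 1) + 1 = ↑i + c.length := by omega
    rw [e1, Nat.add_mod_right, Nat.mod_eq_of_lt i.isLt]
  have hij : (↑i : ℕ) ≠ (↑i + (c.length - 1)) % c.length := by
    intro hh
    rcases Nat.eq_zero_or_pos ↑i with h0 | hpos
    · rw [h0, Nat.zero_add, Nat.mod_eq_of_lt (by omega)] at hh
      omega
    · have e1 : ↑i + (c.length - 1) = (↑i - 1) + c.length := by omega
      rw [e1, Nat.add_mod_right, Nat.mod_eq_of_lt (by omega)] at hh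
      omega
  refine ⟨(c.get i).2, (c.get ⟨_, hjlt⟩).2, ?_, ?_, ?_, ?_, ?_⟩
  · intro hh
    have key : (c.map Prod.snd).get ⟨↑i, by rw [List.length_map]; exact i.isLt⟩
        = (c.map Prod.snd).get ⟨(↑i + (c.length - 1)) % c.length,
            by rw [List.length_map]; exact hjlt⟩ := by
      simp only [List.get_eq_getElem, List.getElem_map]
      exact hh
    have := (h2.get_inj_iff).mp key
    exact hij (congrArg Fin.val this)
  · exact List.mem_map.mpr ⟨c.get i, c.get_mem _, rfl⟩
  · exact List.mem_map.mpr ⟨c.get ⟨_, hjlt⟩, c.get_mem _, rfl⟩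
  · rw [h4 i]; exact Sym2.mem_mk_left _ _
  · rw [h4 ⟨_, hjlt⟩]
    have : (c.get ⟨(↑(⟨_, hjlt⟩ : Fin c.length) + 1) % c.length, Nat.mod_lt _ (⟨_, hjlt⟩ : Fin c.length).pos⟩) = c.get i := by
      congr 1
      exact Fin.ext hji
    rw [this]
    exact Sym2.mem_mk_right _ _

lemma rtg_eq_of_isolated {G : Multigraph V E} {S : Set E} {w x : V}
    (hiso : ∀ f ∈ S, w ∉ G.ends f) (h : Relation.ReflTransGen (G.AdjOn S) w x) : w = x := by
  rcases h.cases_head with h | ⟨c, ⟨f, hfS, hf⟩, _⟩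
  · exact h
  · exact absurd (by rw [hf]; exact Sym2.mem_mk_left _ _) (hiso f hfS)


lemma adjOn_symm {G : Multigraph V E} {S : Set E} {x y : V} (h : G.AdjOn S x y) :
    G.AdjOn S y x := by
  obtain ⟨f, hfS, hf⟩ := h
  exact ⟨f, hfS, by rw [hf, Sym2.eq_swap]⟩

section Contract

variable {u v : V} (huv : u ≠ v)

open Classical in
noncomputable def cmap : V → {x : V // x ≠ v} := fun x =>
  if h : x = v then ⟨u, huv⟩ else ⟨x, h⟩

lemma cmap_apply_ne {x : V} (h : x ≠ v) : cmap huv x = ⟨x, h⟩ := by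
  unfold cmap; rw [dif_neg h]

lemma cmap_v : cmap huv v = ⟨u, huv⟩ := by
  unfold cmap; rw [dif_pos rfl]

lemma cmap_val (a : {x : V // x ≠ v}) : cmap huv a.val = a := by
  rw [cmap_apply_ne huv a.2]

lemma cmap_eq_cases {x y : V} (h : cmap huv x = cmap huv y) :
    x = y ∨ ((x = u ∨ x = v) ∧ (y = u ∨ y = v)) := by
  unfold cmap at h
  split_ifs at h with h1 h2 h2
  · exact Or.inr ⟨Or.inr h1, Or.inr h2⟩
  · have := congrArg Subtype.val h
    simp at this
    subst h1
    exact Or.inr ⟨Or.inr rfl, Or.inl this.symm⟩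
  · have := congrArg Subtype.val h
    simp at this
    subst h2
    exact Or.inr ⟨Or.inl this, Or.inr rfl⟩
  · have := congrArg Subtype.val h
    simp at this
    exact Or.inl this

lemma cmap_eq_u_iff {x : V} : cmap huv x = ⟨u, huv⟩ ↔ x = u ∨ x = v := by
  constructor
  · intro h
    by_cases hx : x = v
    · exact Or.inr hx
    · rw [cmap_apply_ne huv hx] at h
      exact Or.inl (congrArg Subtype.val h)
  · rintro (rfl | rfl)
    · exact cmap_apply_ne huv huv
    · exact cmap_v huv
lemma cmap_eq_of_ne_u {x : V} {a : {x : V // x ≠ v}} (h : cmap huv x = a)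
    (ha : a ≠ ⟨u, huv⟩) : x = a.val := by
  by_cases hx : x = v
  · subst hx; rw [cmap_v huv] at h; exact absurd h.symm (by simpa using ha)
  · rw [cmap_apply_ne huv hx] at h
    exact congrArg Subtype.val h.symm ▸ rfl

variable (G : Multigraph V E) {e : E}

noncomputable def contract (he : G.ends e = s(u, v)) (hpar : ∀ f, G.ends f = s(u, v) → f = e) :
    Multigraph {x : V // x ≠ v} {f : E // f ≠ e} where
  ends f := (G.ends f.val).map (cmap huv)
  loopless := by
    rintro ⟨f, hf⟩ hd
    obtain ⟨p, q, hpq⟩ := sym2_exists (G.ends f)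
    simp only at hd
    rw [hpq, Sym2.map_pair_eq, Sym2.mk_isDiag_iff] at hd
    have hpqne : p ≠ q := by
      have := G.loopless f
      rw [hpq, Sym2.mk_isDiag_iff] at this
      exact this
    rcases cmap_eq_cases huv hd with h | ⟨hp, hq⟩
    · exact hpqne h
    · apply hf
      apply hpar
      rw [hpq]
      rcases hp with rfl | rfl <;> rcases hq with h | h
      · exact absurd h.symm hpqne
      · rw [h]
      · rw [h, Sym2.eq_swap]
      · exact absurd h.symm hpqne

variable (he : G.ends e = s(u, v)) (hpar : ∀ f, G.ends f = s(u, v) → f = e)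

lemma contract_ends (f : {f : E // f ≠ e}) :
    (contract huv G he hpar).ends f = (G.ends f.val).map (cmap huv) := rfl

lemma mem_contract_u_iff (f : {f : E // f ≠ e}) :
    (⟨u, huv⟩ : {x : V // x ≠ v}) ∈ (contract huv G he hpar).ends f ↔
      u ∈ G.ends f.val ∨ v ∈ G.ends f.val := by
  rw [contract_ends, Sym2.mem_map]
  constructor
  · rintro ⟨p, hp, hpe⟩
    rcases (cmap_eq_u_iff huv).mp hpe with rfl | rfl
    · exact Or.inl hp
    · exact Or.inr hp
  · rintro (h | h)
    · exact ⟨u, h, (cmap_eq_u_iff huv).mpr (Or.inl rfl)⟩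
    · exact ⟨v, h, cmap_v huv⟩

lemma mem_contract_other_iff {a : {x : V // x ≠ v}} (hau : a ≠ ⟨u, huv⟩)
    (f : {f : E // f ≠ e}) :
    a ∈ (contract huv G he hpar).ends f ↔ a.val ∈ G.ends f.val := by
  rw [contract_ends, Sym2.mem_map]
  constructor
  · rintro ⟨p, hp, hpe⟩
    rwa [cmap_eq_of_ne_u huv hpe hau] at hp
  · intro h
    exact ⟨a.val, h, cmap_val huv a⟩

lemma rtg_adjOn_symm {G : Multigraph V E} {S : Set E} {x y : V}
    (h : Relation.ReflTransGen (G.AdjOn S) x y) :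
    Relation.ReflTransGen (G.AdjOn S) y x :=
  (@Relation.ReflTransGen.symmetric _ (G.AdjOn S) ⟨fun _ _ => adjOn_symm⟩).symm _ _ h

lemma bridge (he : G.ends e = s(u, v)) {S : Set E} (heS' : e ∈ S) {x : V}
    {a : {x : V // x ≠ v}} (h : cmap huv x = a) :
    Relation.ReflTransGen (G.AdjOn S) a.val x := by
  by_cases hx : x = v
  · subst hx
    rw [cmap_v huv] at h
    subst h
    exact Relation.ReflTransGen.single ⟨e, heS', he⟩
  · rw [cmap_apply_ne huv hx] at h
    subst h
    exact Relation.ReflTransGen.refl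

lemma lift_adj {S' : Set {f : E // f ≠ e}} {S : Set E} (heS : e ∈ S)
    (hsub : ∀ f : {f : E // f ≠ e}, f ∈ S' → f.val ∈ S)
    {a b : {x : V // x ≠ v}} (h : (contract huv G he hpar).AdjOn S' a b) :
    Relation.ReflTransGen (G.AdjOn S) a.val b.val := by
  obtain ⟨f, hfS, hf⟩ := h
  rw [contract_ends] at hf
  obtain ⟨p, q, hpq⟩ := sym2_exists (G.ends f.val)
  rw [hpq, Sym2.map_pair_eq, Sym2.eq_iff] at hf
  have hstep : ∀ {p' q' : V}, cmap huv p' = a → cmap huv q' = b → G.ends f.val = s(p', q') →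
      Relation.ReflTransGen (G.AdjOn S) a.val b.val := by
    intro p' q' hp' hq' hends
    have h1 : Relation.ReflTransGen (G.AdjOn S) a.val p' :=
      bridge huv G he heS hp'
    have h2 : G.AdjOn S p' q' := ⟨f.val, hsub f hfS, hends⟩
    have h3 : Relation.ReflTransGen (G.AdjOn S) b.val q' :=
      bridge huv G he heS hq'
    exact (h1.trans (Relation.ReflTransGen.single h2)).trans (rtg_adjOn_symm h3)
  rcases hf with ⟨hp, hq⟩ | ⟨hp, hq⟩
  · exact hstep hp hq hpq
  · exact hstep hq hp (by rw [hpq, Sym2.eq_swap])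

lemma proj_adj (he : G.ends e = s(u, v)) {x y : V} (h : G.Adj x y) :
    Relation.ReflTransGen ((contract huv G he hpar).Adj) (cmap huv x) (cmap huv y) := by
  obtain ⟨g, -, hg⟩ := h
  by_cases hge : g = e
  · subst hge
    rw [he] at hg
    rcases Sym2.eq_iff.mp hg with ⟨rfl, rfl⟩ | ⟨rfl, rfl⟩
    · rw [cmap_v huv, cmap_apply_ne huv huv]
    · rw [cmap_v huv, cmap_apply_ne huv huv]
  · exact Relation.ReflTransGen.single
      ⟨⟨g, hge⟩, trivial, by rw [contract_ends, hg, Sym2.map_pair_eq]⟩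

/-- The projection of a list of (vertex,edge) pairs avoiding `e`. -/
noncomputable def projList (l : List (V × E)) (hl : ∀ p ∈ l, p.2 ≠ e) :
    List ({x : V // x ≠ v} × {f : E // f ≠ e}) :=
  l.pmap (fun (p : V × E) (hp : p.2 ≠ e) =>
    ((cmap huv p.1, ⟨p.2, hp⟩) : {x : V // x ≠ v} × {f : E // f ≠ e})) hl

lemma projList_length (l : List (V × E)) (hl : ∀ p ∈ l, p.2 ≠ e) :
    (projList huv l hl).length = l.length := List.length_pmap

lemma projList_get (l : List (V × E)) (hl : ∀ p ∈ l, p.2 ≠ e)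
    {n : ℕ} (hn : n < (projList huv l hl).length) :
    (projList huv l hl).get ⟨n, hn⟩ =
      (cmap huv (l.get ⟨n, by rw [projList_length] at hn; exact hn⟩).1,
       ⟨(l.get ⟨n, by rw [projList_length] at hn; exact hn⟩).2,
        hl _ (l.get_mem _)⟩) := by
  simp only [projList, List.get_eq_getElem, List.getElem_pmap]

lemma projList_map_fst (l : List (V × E)) (hl : ∀ p ∈ l, p.2 ≠ e) :
    (projList huv l hl).map Prod.fst = (l.map Prod.fst).map (cmap huv) := by
  apply List.ext_getElem
  · simp [projList]
  · intro n h1 h2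
    simp [projList, List.getElem_pmap]

lemma projList_map_snd (l : List (V × E)) (hl : ∀ p ∈ l, p.2 ≠ e) :
    ((projList huv l hl).map Prod.snd).map Subtype.val = l.map Prod.snd := by
  apply List.ext_getElem
  · simp [projList]
  · intro n h1 h2
    simp [projList, List.getElem_pmap]

/-- A cycle of `G` avoiding `e`, `u` and `v` projects to a cycle of the contraction. -/
lemma isCycle_proj (he : G.ends e = s(u, v)) {l : List (V × E)} (hcyc : G.IsCycle l)
    (hedge : ∀ p ∈ l, p.2 ≠ e) (hvert : ∀ p ∈ l, p.1 ≠ u ∧ p.1 ≠ v) :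
    (contract huv G he hpar).IsCycle (projList huv l hedge) := by
  rw [isCycle_def] at hcyc ⊢
  obtain ⟨h1, h2, h3, h4⟩ := hcyc
  have hlen := projList_length huv l hedge
  refine ⟨?_, ?_, ?_, ?_⟩
  · rw [projList_map_fst]
    refine List.Nodup.map_on ?_ h1
    intro x hx y hy hxy
    obtain ⟨px, hpx, rfl⟩ := List.mem_map.mp hx
    obtain ⟨py, hpy, rfl⟩ := List.mem_map.mp hy
    rcases cmap_eq_cases huv hxy with h | ⟨hx', -⟩
    · exact h
    · rcases hx' with h' | h'
      · exact absurd h' (hvert px hpx).1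
      · exact absurd h' (hvert px hpx).2
  · have hval := projList_map_snd huv l hedge
    have h2' : (((projList huv l hedge).map Prod.snd).map Subtype.val).Nodup := by
      rw [hval]; exact h2
    exact h2'.of_map _
  · omega
  · intro n hn hm
    have hn' : n < l.length := by omega
    have hmod : (n + 1) % (projList huv l hedge).length = (n + 1) % l.length := by rw [hlen]
    have hm' : (n + 1) % l.length < l.length := Nat.mod_lt _ (by omega)
    have g1 : (projList huv l hedge)[n] =
        (cmap huv (l[n]'hn').1, ⟨(l[n]'hn').2, hedge _ (List.getElem_mem hn')⟩) :=
      List.getElem_pmap _ _ hn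
    have g2 : (projList huv l hedge)[(n+1) % (projList huv l hedge).length] =
        (cmap huv (l[(n+1) % l.length]'hm').1,
          ⟨(l[(n+1) % l.length]'hm').2, hedge _ (List.getElem_mem hm')⟩) := by
      rw [list_getElem_congr hmod hm]
      exact List.getElem_pmap _ _ (by simp only [List.length_pmap]; omega)
    rw [g1, g2]
    show (contract huv G he hpar).ends ⟨(l[n]'hn').2, _⟩ = _
    rw [contract_ends]
    have := h4 n hn' hm'
    simp only at this ⊢
    rw [this, Sym2.map_pair_eq]

/-- A cycle of the contraction avoiding the merged vertex lifts to a cycle of `G`. -/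
lemma isCycle_unproj (he : G.ends e = s(u, v))
    {l : List ({x : V // x ≠ v} × {f : E // f ≠ e})}
    (hc' : (contract huv G he hpar).IsCycle l)
    (hu : ∀ p ∈ l, p.1 ≠ ⟨u, huv⟩) :
    G.IsCycle (l.map (fun p => (p.1.val, p.2.val))) := by
  rw [isCycle_def] at hc' ⊢
  obtain ⟨h1, h2, h3, h4⟩ := hc'
  have hlen : (l.map (fun p => (p.1.val, p.2.val))).length = l.length := List.length_map _
  have hfst : (l.map (fun p => (p.1.val, p.2.val))).map Prod.fst
      = (l.map Prod.fst).map Subtype.val := by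
    rw [List.map_map, List.map_map]; rfl
  have hsnd : (l.map (fun p => (p.1.val, p.2.val))).map Prod.snd
      = (l.map Prod.snd).map Subtype.val := by
    rw [List.map_map, List.map_map]; rfl
  refine ⟨?_, ?_, ?_, ?_⟩
  · rw [hfst]; exact h1.map Subtype.val_injective
  · rw [hsnd]; exact h2.map Subtype.val_injective
  · omega
  · intro n hn hm
    have hn' : n < l.length := by omega
    have hmod : (n + 1) % (l.map (fun p => (p.1.val, p.2.val))).length
        = (n + 1) % l.length := by rw [hlen]
    have hm' : (n + 1) % l.length < l.length := Nat.mod_lt _ (by omega)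
    have g1 : (l.map (fun p => (p.1.val, p.2.val)))[n] = ((l[n]'hn').1.val, (l[n]'hn').2.val) :=
      List.getElem_map _
    have g2 : (l.map (fun p => (p.1.val, p.2.val)))[(n+1) % (l.map (fun p => (p.1.val, p.2.val))).length]
        = ((l[(n+1) % l.length]'hm').1.val, (l[(n+1) % l.length]'hm').2.val) := by
      rw [list_getElem_congr hmod hm]
      exact List.getElem_map _
    rw [g1, g2]
    have := h4 n hn' hm'
    rw [contract_ends] at this
    obtain ⟨p, q, hpq⟩ := sym2_exists (G.ends (l[n]'hn').2.val)
    rw [hpq, Sym2.map_pair_eq, Sym2.eq_iff] at this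
    have hmem1 : l[n]'hn' ∈ l := List.getElem_mem hn'
    have hmem2 : l[(n+1) % l.length]'hm' ∈ l := List.getElem_mem hm'
    simp only at hpq this ⊢
    rcases this with ⟨hp, hq⟩ | ⟨hp, hq⟩
    · rw [hpq]
      rw [cmap_eq_of_ne_u huv hp (hu _ hmem1), cmap_eq_of_ne_u huv hq (hu _ hmem2)]
    · rw [hpq, Sym2.eq_swap]
      rw [cmap_eq_of_ne_u huv hq (hu _ hmem1), cmap_eq_of_ne_u huv hp (hu _ hmem2)]

lemma mem_ends_e_left (he : G.ends e = s(u, v)) : u ∈ G.ends e := by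
  rw [he]; exact Sym2.mem_mk_left _ _

lemma mem_ends_e_right (he : G.ends e = s(u, v)) : v ∈ G.ends e := by
  rw [he]; exact Sym2.mem_mk_right _ _

lemma deg_contract_other [Finite E] (he : G.ends e = s(u, v))
    {a : {x : V // x ≠ v}} (ha : a ≠ ⟨u, huv⟩) :
    (contract huv G he hpar).deg a = G.deg a.val := by
  unfold deg
  apply Nat.card_congr
  refine ⟨fun x => ⟨x.1.1, ((mem_contract_other_iff huv G he hpar ha x.1).mp x.2)⟩,
    fun y => ⟨⟨y.1, ?_⟩, (mem_contract_other_iff huv G he hpar ha _).mpr y.2⟩, ?_, ?_⟩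
  · intro hye
    have := y.2
    rw [hye, he, Sym2.mem_iff] at this
    rcases this with h | h
    · exact ha (Subtype.ext h)
    · exact a.2 h
  · intro x; rfl
  · intro y; rfl

lemma deg_contract_u [Finite E] (he : G.ends e = s(u, v))
    (hu2 : G.deg u = 2) (hv2 : G.deg v = 2) :
    (contract huv G he hpar).deg ⟨u, huv⟩ = 2 := by
  obtain ⟨eu, heu_ne, heu_mem, heu_all⟩ := two_edges hu2 (mem_ends_e_left G he)
  obtain ⟨ev, hev_ne, hev_mem, hev_all⟩ := two_edges hv2 (mem_ends_e_right G he)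
  have heuev : eu ≠ ev := by
    intro h
    subst h
    have : G.ends eu = s(u, v) := Sym2.eq_of_ne_mem huv heu_mem hev_mem
      (Sym2.mem_mk_left _ _) (Sym2.mem_mk_right _ _)
    exact heu_ne (hpar eu this)
  have hset : {f : {f : E // f ≠ e} | (⟨u, huv⟩ : {x : V // x ≠ v}) ∈ (contract huv G he hpar).ends f}
      = {(⟨eu, heu_ne⟩ : {f : E // f ≠ e}), ⟨ev, hev_ne⟩} := by
    ext f
    simp only [Set.mem_setOf_eq, Set.mem_insert_iff, Set.mem_singleton_iff]
    rw [mem_contract_u_iff]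
    constructor
    · rintro (h | h)
      · rcases heu_all f.val h with h' | h'
        · exact absurd h' f.2
        · exact Or.inl (Subtype.ext h')
      · rcases hev_all f.val h with h' | h'
        · exact absurd h' f.2
        · exact Or.inr (Subtype.ext h')
    · rintro (rfl | rfl)
      · exact Or.inl heu_mem
      · exact Or.inr hev_mem
  show Nat.card {f : {f : E // f ≠ e} // (⟨u, huv⟩ : {x : V // x ≠ v}) ∈ (contract huv G he hpar).ends f} = 2
  have : Nat.card {f : {f : E // f ≠ e} // (⟨u, huv⟩ : {x : V // x ≠ v}) ∈ (contract huv G he hpar).ends f}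
      = ({(⟨eu, heu_ne⟩ : {f : E // f ≠ e}), ⟨ev, hev_ne⟩} : Set {f : E // f ≠ e}).ncard := by
    rw [← hset, ← Nat.card_coe_set_eq]
    rfl
  rw [this]
  exact Set.ncard_pair (by intro h; exact heuev (congrArg Subtype.val h))

lemma lift_rtg {S' : Set {f : E // f ≠ e}} {S : Set E} (he : G.ends e = s(u, v))
    (heS : e ∈ S) (hsub : ∀ f : {f : E // f ≠ e}, f ∈ S' → f.val ∈ S)
    {a b : {x : V // x ≠ v}}
    (h : Relation.ReflTransGen ((contract huv G he hpar).AdjOn S') a b) :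
    Relation.ReflTransGen (G.AdjOn S) a.val b.val := by
  induction h with
  | refl => exact Relation.ReflTransGen.refl
  | tail hab hstep ih => exact ih.trans (lift_adj huv G he hpar heS hsub hstep)

lemma proj_rtg (he : G.ends e = s(u, v)) {x y : V}
    (h : Relation.ReflTransGen G.Adj x y) :
    Relation.ReflTransGen ((contract huv G he hpar).Adj) (cmap huv x) (cmap huv y) := by
  induction h with
  | refl => exact Relation.ReflTransGen.refl
  | tail hab hstep ih => exact ih.trans (proj_adj huv G hpar he hstep)

lemma exists_contract_cycle (he : G.ends e = s(u, v))
    {l : List (V × E)} (hcyc : G.IsCycle l) (hemem : e ∈ l.map Prod.snd) :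
    ∃ l' : List ({x : V // x ≠ v} × {f : E // f ≠ e}),
      (contract huv G he hpar).IsCycle l' ∧ ∀ p ∈ l', p.2.val ∈ l.map Prod.snd := by
  classical
  -- find the position of e and rotate it to the end
  obtain ⟨q, hq, hqe⟩ := List.mem_map.mp hemem
  obtain ⟨⟨j, hj⟩, hget⟩ := List.mem_iff_get.mp hq
  have hd := hcyc.rotate (j + 1)
  set d := l.rotate (j + 1) with hd_def
  have hmemd : ∀ x, x ∈ d ↔ x ∈ l := fun x => List.mem_rotate
  obtain ⟨d1, d2, d3, d4⟩ := isCycle_def.mp hd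
  have hn : d.length = l.length := l.length_rotate _
  have hnpos : 0 < d.length := by omega
  have hn1 : d.length - 1 < d.length := by omega
  have hlaste : (d[d.length - 1]'hn1).2 = e := by
    have : d.get ⟨d.length - 1, hn1⟩ = l.get ⟨(d.length - 1 + (j+1)) % l.length, Nat.mod_lt _ (by omega)⟩ :=
      List.get_rotate l (j+1) ⟨d.length - 1, hn1⟩
    have hidx : (d.length - 1 + (j+1)) % l.length = j := by
      have : d.length - 1 + (j+1) = l.length + j := by omega
      rw [this, Nat.add_comm, Nat.add_mod_right, Nat.mod_eq_of_lt hj]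
    simp only [List.get_eq_getElem] at this hget
    rw [this, list_getElem_congr hidx (Nat.mod_lt _ (by omega)), hget, hqe]
  -- endpoints of e in the rotated cycle
  have hm0 : (0 : ℕ) < d.length := hnpos
  have hcond := d4 (d.length - 1) hn1 (Nat.mod_lt _ hnpos)
  have hzero : (d.length - 1 + 1) % d.length = 0 := by
    have : d.length - 1 + 1 = d.length := by omega
    rw [this, Nat.mod_self]
  rw [hlaste, list_getElem_congr hzero (Nat.mod_lt _ hnpos), he] at hcond
  -- so {a, b} = {u, v} where a = last vertex, b = first vertex
  have hab := Sym2.eq_iff.mp hcond.symm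
  -- the cycle has length at least 3
  have hn3 : 3 ≤ d.length := by
    by_contra hlt
    have hn2 : d.length = 2 := by omega
    have h0 : (0 : ℕ) < d.length := hnpos
    have h1 : (1 : ℕ) < d.length := by omega
    have hc0 := d4 0 h0 (Nat.mod_lt _ hnpos)
    have hidx01 : (0 + 1) % d.length = 1 := by rw [hn2]
    rw [list_getElem_congr hidx01 (Nat.mod_lt _ hnpos)] at hc0
    have h1n : d.length - 1 = 1 := by omega
    have hlaste' : (d[1]'h1).2 = e := by
      rw [← list_getElem_congr h1n hn1]; exact hlaste
    have hends0 : G.ends (d[0]'h0).2 = s(u, v) := by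
      rw [hc0, Sym2.eq_swap]
      have ha := list_getElem_congr h1n hn1
      rw [ha] at hcond
      exact hcond.symm
    have := hpar _ hends0
    -- contradiction with edge nodup
    have hne : (d[0]'h0).2 ≠ (d[1]'h1).2 := by
      intro hc
      have g0 : (d.map Prod.snd)[0]'(by simp; omega) = (d[0]'h0).2 := by
        simp
      have g1 : (d.map Prod.snd)[1]'(by simp; omega) = (d[1]'h1).2 := by
        simp
      have := List.Nodup.getElem_inj_iff d2 (i := 0) (j := 1)
        (hi := by simp; omega) (hj := by simp; omega)
      rw [g0, g1] at this
      exact absurd (this.mp hc) (by omega)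
    exact hne (by rw [this, hlaste'])
  -- the truncated list avoids e
  have htk : ∀ p ∈ d.take (d.length - 1), p.2 ≠ e := by
    intro p hp hpe
    obtain ⟨⟨i, hi⟩, hgi⟩ := List.mem_iff_get.mp hp
    have hi' : i < d.length - 1 := by
      have := hi; rw [List.length_take] at this; omega
    have hgi' : d[i]'(by omega) = p := by
      have := List.getElem_take (xs := d) (j := d.length - 1) (i := i) (h := hi)
      simp only [List.get_eq_getElem] at hgi
      rw [← hgi, this]
    have hsi : (d.map Prod.snd)[i]'(by simp; omega) = e := by
      simp only [List.getElem_map]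
      rw [hgi']; exact hpe
    have hsl : (d.map Prod.snd)[d.length - 1]'(by simp; omega) = e := by
      simp only [List.getElem_map]
      exact hlaste
    have := List.Nodup.getElem_inj_iff d2 (i := i) (j := d.length - 1)
      (hi := by simp; omega) (hj := by simp; omega)
    rw [hsi, hsl] at this
    have := this.mp rfl
    omega
  have htklen : (d.take (d.length - 1)).length = d.length - 1 := by
    rw [List.length_take]; omega
  have hplen : (projList huv (d.take (d.length - 1)) htk).length = d.length - 1 := by
    rw [projList_length, htklen]
  have htget : ∀ (i : ℕ) (hi : i < d.length - 1),
      (d.take (d.length - 1))[i]'(by omega) = d[i]'(by omega) := by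
    intro i hi
    exact List.getElem_take
  have hnotlast : ∀ x ∈ (d.map Prod.fst).take (d.length - 1), x ≠ (d[d.length - 1]'hn1).1 := by
    intro x hx hxa
    obtain ⟨⟨i, hi⟩, hgi⟩ := List.mem_iff_get.mp hx
    have hml : (d.map Prod.fst).length = d.length := List.length_map _
    have hi' : i < d.length - 1 := by
      have := hi; rw [List.length_take] at this; omega
    have hgi' : (d.map Prod.fst)[i]'(by omega) = x := by
      have := List.getElem_take (xs := d.map Prod.fst) (j := d.length - 1) (i := i) (h := hi)
      simp only [List.get_eq_getElem] at hgi
      rw [← hgi, this]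
    have hga : (d.map Prod.fst)[d.length - 1]'(by omega) = (d[d.length - 1]'hn1).1 := by
      simp
    have := List.Nodup.getElem_inj_iff d1 (i := i) (j := d.length - 1)
      (hi := by omega) (hj := by omega)
    rw [hgi', hga, hxa] at this
    have := this.mp rfl
    omega
  refine ⟨projList huv (d.take (d.length - 1)) htk, ?_, ?_⟩
  · refine isCycle_def.mpr ⟨?_, ?_, ?_, ?_⟩
    · rw [projList_map_fst, List.map_take]
      refine List.Nodup.map_on ?_ ((List.take_sublist _ _).nodup d1)
      intro x hx y hy hxy
      rcases cmap_eq_cases huv hxy with h | ⟨hx', hy'⟩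
      · exact h
      · rcases hab with ⟨hau, hbv⟩ | ⟨hav, hbu⟩
        · have hxne : x ≠ u := by rw [← hau]; exact hnotlast x hx
          have hyne : y ≠ u := by rw [← hau]; exact hnotlast y hy
          rcases hx' with h' | h' <;> rcases hy' with h'' | h''
          · exact absurd h' hxne
          · exact absurd h' hxne
          · exact absurd h'' hyne
          · rw [h', h'']
        · have hxne : x ≠ v := by rw [← hav]; exact hnotlast x hx
          have hyne : y ≠ v := by rw [← hav]; exact hnotlast y hy
          rcases hx' with h' | h' <;> rcases hy' with h'' | h''
          · rw [h', h'']
          · exact absurd h'' hyne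
          · exact absurd h' hxne
          · exact absurd h' hxne
    · have hval := projList_map_snd huv (d.take (d.length - 1)) htk
      have : (((projList huv (d.take (d.length - 1)) htk).map Prod.snd).map Subtype.val).Nodup := by
        rw [hval, List.map_take]
        exact (List.take_sublist _ _).nodup d2
      exact this.of_map _
    · omega
    · intro m hm hm2
      have hm' : m < d.length - 1 := by omega
      have hmd : m < d.length := by omega
      have g1 : (projList huv (d.take (d.length - 1)) htk)[m]'hm =
          (cmap huv ((d.take (d.length - 1))[m]'(by omega)).1,
           ⟨((d.take (d.length - 1))[m]'(by omega)).2, htk _ (List.getElem_mem _)⟩) :=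
        List.getElem_pmap _ _ hm
      by_cases hcase : m + 1 < d.length - 1
      · have hmod2 : (m + 1) % (projList huv (d.take (d.length - 1)) htk).length = m + 1 := by
          rw [hplen]; exact Nat.mod_eq_of_lt hcase
        have g2 : (projList huv (d.take (d.length - 1)) htk)[(m+1) % (projList huv (d.take (d.length - 1)) htk).length]'hm2 =
            (cmap huv ((d.take (d.length - 1))[m+1]'(by omega)).1,
             ⟨((d.take (d.length - 1))[m+1]'(by omega)).2, htk _ (List.getElem_mem _)⟩) := by
          rw [list_getElem_congr hmod2 hm2]
          exact List.getElem_pmap _ _ (by simp only [List.length_pmap, List.length_take]; omega)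
        rw [g1, g2, contract_ends]
        simp only
        rw [htget m hm', htget (m+1) (by omega)]
        have hmod : (m + 1) % d.length = m + 1 := Nat.mod_eq_of_lt (by omega)
        have hc := d4 m hmd (by rw [hmod]; omega)
        rw [list_getElem_congr hmod (by omega)] at hc
        rw [hc, Sym2.map_pair_eq]
      · have hmeq : m + 1 = d.length - 1 := by omega
        have hmod2 : (m + 1) % (projList huv (d.take (d.length - 1)) htk).length = 0 := by
          rw [hplen, hmeq, Nat.mod_self]
        have g2 : (projList huv (d.take (d.length - 1)) htk)[(m+1) % (projList huv (d.take (d.length - 1)) htk).length]'hm2 =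
            (cmap huv ((d.take (d.length - 1))[0]'(by omega)).1,
             ⟨((d.take (d.length - 1))[0]'(by omega)).2, htk _ (List.getElem_mem _)⟩) := by
          rw [list_getElem_congr hmod2 hm2]
          exact List.getElem_pmap _ _ (by simp only [List.length_pmap, List.length_take]; omega)
        rw [g1, g2, contract_ends]
        simp only
        rw [htget m hm', htget 0 (by omega)]
        have hmod : (m + 1) % d.length = d.length - 1 := by
          rw [hmeq]; exact Nat.mod_eq_of_lt (by omega)
        have hc := d4 m hmd (by rw [hmod]; omega)
        rw [list_getElem_congr hmod (by omega)] at hc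
        rw [hc, Sym2.map_pair_eq]
        have hcu : cmap huv (d[d.length - 1]'hn1).1 = ⟨u, huv⟩ := by
          apply (cmap_eq_u_iff huv).mpr
          rcases hab with ⟨h1', -⟩ | ⟨h1', -⟩
          · exact Or.inl h1'
          · exact Or.inr h1'
        have hcb : cmap huv (d[0]'hnpos).1 = ⟨u, huv⟩ := by
          apply (cmap_eq_u_iff huv).mpr
          rcases hab with ⟨-, h2'⟩ | ⟨-, h2'⟩
          · exact Or.inr h2'
          · exact Or.inl h2'
        rw [hcu, hcb]
  · intro p hp
    obtain ⟨q', hq', hfq⟩ := List.mem_pmap.mp hp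
    obtain ⟨hq'', rfl⟩ := hfq
    have : q' ∈ d := List.mem_of_mem_take hq'
    exact List.mem_map.mpr ⟨q', (hmemd q').mp this, rfl⟩

lemma contract_separating [Finite E] (he : G.ends e = s(u, v))
    (hsep : G.Separating) (hu2 : G.deg u = 2) (hv2 : G.deg v = 2) :
    (contract huv G he hpar).Separating := by
  intro l' hcyc' hconn'
  set H := contract huv G he hpar with hH
  by_cases hul : ∃ i : Fin l'.length, (l'.get i).1 = ⟨u, huv⟩
  · -- merged vertex lies on the cycle; it gets isolated
    obtain ⟨i, hiu⟩ := hul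
    obtain ⟨f, f', hff', hfm, hf'm, hfi, hf'i⟩ := cycle_edges_at hcyc' i
    rw [hiu] at hfi hf'i
    have hdeg2 : H.deg ⟨u, huv⟩ = 2 := deg_contract_u huv G hpar he hu2 hv2
    obtain ⟨g', hg'ne, hg'mem, hall⟩ := two_edges hdeg2 hfi
    -- every edge at ⟨u⟩ is f or f', both on the cycle
    have hcover : ∀ g, (⟨u, huv⟩ : {x : V // x ≠ v}) ∈ H.ends g → g ∈ l'.map Prod.snd := by
      intro g hg
      rcases hall g hg with rfl | rfl
      · exact hfm
      · rcases hall f' hf'i with h' | h'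
        · exact absurd h'.symm hff'
        · rw [← h']; exact hf'm
    -- but the complement connects ⟨u⟩ to a different cycle vertex
    obtain ⟨h1, h2, h3, h4⟩ := hcyc'
    have hnpos : 0 < l'.length := by omega
    have hne : (l'.get ⟨(↑i + 1) % l'.length, Nat.mod_lt _ hnpos⟩).1 ≠ ⟨u, huv⟩ := by
      intro hcontra
      have hidx : (↑i : ℕ) ≠ (↑i + 1) % l'.length := by
        rcases Nat.lt_or_ge (↑i + 1) l'.length with h' | h'
        · rw [Nat.mod_eq_of_lt h']; omega
        · have : (↑i : ℕ) + 1 = l'.length := by omega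
          rw [this, Nat.mod_self]; omega
      have e1 : (l'.map Prod.fst)[↑i]'(by simp only [List.length_map]; omega) =
          (⟨u, huv⟩ : {x : V // x ≠ v}) := by
        simpa using hiu
      have e2 : (l'.map Prod.fst)[(↑i + 1) % l'.length]'(by
          simp only [List.length_map]; exact Nat.mod_lt _ hnpos) =
          (⟨u, huv⟩ : {x : V // x ≠ v}) := by
        simpa using hcontra
      exact hidx ((List.Nodup.getElem_inj_iff h1).mp (e1.trans e2.symm))
    have hrtg := hconn'.2 ⟨u, huv⟩ (l'.get ⟨(↑i + 1) % l'.length, Nat.mod_lt _ hnpos⟩).1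
    have := rtg_eq_of_isolated ?_ hrtg
    · exact hne this.symm
    · intro g hgS hgu
      exact hgS (hcover g hgu)
  · -- merged vertex not on the cycle: lift it to G
    push_neg at hul
    have hu' : ∀ p ∈ l', p.1 ≠ ⟨u, huv⟩ := by
      intro p hp
      obtain ⟨i, hgi⟩ := List.mem_iff_get.mp hp
      rw [← hgi]
      exact hul i
    have hcycG := isCycle_unproj huv G hpar he hcyc' hu'
    apply hsep _ hcycG
    set l := l'.map (fun p => (p.1.val, p.2.val)) with hl
    have hsndl : l.map Prod.snd = (l'.map Prod.snd).map Subtype.val := by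
      rw [hl, List.map_map, List.map_map]; rfl
    have heS : e ∈ {g : E | g ∉ l.map Prod.snd} := by
      intro hmem
      rw [hsndl] at hmem
      obtain ⟨g, -, hg⟩ := List.mem_map.mp hmem
      exact g.2 hg
    have hsub : ∀ f : {f : E // f ≠ e}, f ∈ {g : {f : E // f ≠ e} | g ∉ l'.map Prod.snd} →
        f.val ∈ {g : E | g ∉ l.map Prod.snd} := by
      intro f hf hmem
      rw [hsndl] at hmem
      obtain ⟨g, hg, hgv⟩ := List.mem_map.mp hmem
      exact hf (by rwa [Subtype.val_injective hgv] at hg)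
    refine ⟨⟨u⟩, fun x y => ?_⟩
    have hmid := lift_rtg huv G hpar he heS hsub
      (hconn'.2 (cmap huv x) (cmap huv y))
    have hx : Relation.ReflTransGen (G.AdjOn {g : E | g ∉ l.map Prod.snd}) x (cmap huv x).val :=
      rtg_adjOn_symm (bridge huv G he heS rfl)
    have hy : Relation.ReflTransGen (G.AdjOn {g : E | g ∉ l.map Prod.snd}) (cmap huv y).val y :=
      bridge huv G he heS rfl
    exact (hx.trans hmid).trans hy

lemma hasTM_of_contract [Finite E] (he : G.ends e = s(u, v))
    (hu2 : G.deg u = 2) (hv2 : G.deg v = 2)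
    (h : (contract huv G he hpar).HasTM) : G.HasTM := by
  obtain ⟨T', M', hunion, hdisj, htree', hmatch'⟩ := h
  obtain ⟨eu, heu_ne, heu_mem, heu_all⟩ := two_edges hu2 (mem_ends_e_left G he)
  obtain ⟨ev, hev_ne, hev_mem, hev_all⟩ := two_edges hv2 (mem_ends_e_right G he)
  refine ⟨insert e (Subtype.val '' T'), Subtype.val '' M', ?_, ?_, ⟨?_, ?_⟩, ?_⟩
  · ext g
    simp only [Set.mem_union, Set.mem_insert_iff, Set.mem_image, Set.mem_univ, iff_true]
    by_cases hg : g = e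
    · exact Or.inl (Or.inl hg)
    · have : (⟨g, hg⟩ : {f : E // f ≠ e}) ∈ T' ∪ M' := by rw [hunion]; trivial
      rcases this with h' | h'
      · exact Or.inl (Or.inr ⟨⟨g, hg⟩, h', rfl⟩)
      · exact Or.inr ⟨⟨g, hg⟩, h', rfl⟩
  · rw [Set.disjoint_left]
    rintro g (rfl | ⟨g', hg', rfl⟩) hM
    · obtain ⟨g'', -, hg''⟩ := hM
      exact g''.2 hg''
    · obtain ⟨g'', hg'', hval⟩ := hM
      rw [Subtype.val_injective hval] at hg''
      exact Set.disjoint_left.mp hdisj hg' hg''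
  · -- connectivity of the tree
    refine ⟨⟨u⟩, fun x y => ?_⟩
    have heT : e ∈ insert e (Subtype.val '' T') := Set.mem_insert _ _
    have hsub : ∀ f : {f : E // f ≠ e}, f ∈ T' → f.val ∈ insert e (Subtype.val '' T') :=
      fun f hf => Set.mem_insert_of_mem _ ⟨f, hf, rfl⟩
    have hmid := lift_rtg huv G hpar he heT hsub (htree'.1.2 (cmap huv x) (cmap huv y))
    have hx := rtg_adjOn_symm (bridge huv G he heT (rfl : cmap huv x = cmap huv x))
    have hy := bridge huv G he heT (rfl : cmap huv y = cmap huv y)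
    exact (hx.trans hmid).trans hy
  · -- acyclicity
    rintro ⟨l, hcyc, hsubT⟩
    by_cases hemem : e ∈ l.map Prod.snd
    · obtain ⟨l', hcyc', hl'e⟩ := exists_contract_cycle huv G hpar he hcyc hemem
      refine htree'.2 ⟨l', hcyc', fun p hp => ?_⟩
      obtain ⟨q, hq, hqv⟩ := List.mem_map.mp (hl'e p hp)
      have := hsubT q hq
      rw [hqv] at this
      rcases this with h' | ⟨b, hbT', hbv⟩
      · exact absurd h' p.2.2
      · rwa [Subtype.val_injective hbv] at hbT'
    · have hedge : ∀ p ∈ l, p.2 ≠ e := by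
        intro p hp hpe
        exact hemem (List.mem_map.mpr ⟨p, hp, hpe⟩)
      have hvert : ∀ p ∈ l, p.1 ≠ u ∧ p.1 ≠ v := by
        intro p hp
        obtain ⟨i, hgi⟩ := List.mem_iff_get.mp hp
        obtain ⟨f, f', hff', hfm, hf'm, hfi, hf'i⟩ := cycle_edges_at hcyc i
        constructor
        · intro hpu
          rw [hgi, hpu] at hfi hf'i
          have h1 : f = eu := by
            rcases heu_all f hfi with h' | h'
            · exact absurd h' (by intro hc; exact hemem (hc ▸ hfm))
            · exact h'
          have h2 : f' = eu := by
            rcases heu_all f' hf'i with h' | h'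
            · exact absurd h' (by intro hc; exact hemem (hc ▸ hf'm))
            · exact h'
          exact hff' (h1.trans h2.symm)
        · intro hpv
          rw [hgi, hpv] at hfi hf'i
          have h1 : f = ev := by
            rcases hev_all f hfi with h' | h'
            · exact absurd h' (by intro hc; exact hemem (hc ▸ hfm))
            · exact h'
          have h2 : f' = ev := by
            rcases hev_all f' hf'i with h' | h'
            · exact absurd h' (by intro hc; exact hemem (hc ▸ hf'm))
            · exact h'
          exact hff' (h1.trans h2.symm)
      refine htree'.2 ⟨projList huv l hedge, isCycle_proj huv G hpar he hcyc hedge hvert,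
        fun p hp => ?_⟩
      obtain ⟨q, hq, hfq⟩ := List.mem_pmap.mp hp
      obtain ⟨hq', rfl⟩ := hfq
      have := hsubT q hq
      rcases this with h' | ⟨b, hbT', hbv⟩
      · exact absurd h' (hedge q hq)
      · have : b = ⟨q.2, hedge q hq⟩ := Subtype.ext hbv
        rw [← this]
        exact hbT'
  · -- matching
    rintro g ⟨g', hg', rfl⟩ f ⟨f', hf', rfl⟩ hne x ⟨hxg, hxf⟩
    have hne' : g' ≠ f' := fun hc => hne (congrArg Subtype.val hc)
    refine hmatch' g' hg' f' hf' hne' (cmap huv x) ⟨?_, ?_⟩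
    · rw [contract_ends, Sym2.mem_map]
      exact ⟨x, hxg, rfl⟩
    · rw [contract_ends, Sym2.mem_map]
      exact ⟨x, hxf, rfl⟩

lemma hasTM_of_parallel [Finite E] (he : G.ends e = s(u, v)) {f : E} (hfe : f ≠ e)
    (hf : G.ends f = s(u, v)) (hconn : G.Connected)
    (hu2 : G.deg u = 2) (hv2 : G.deg v = 2) : G.HasTM := by
  obtain ⟨eu, heu_ne, heu_mem, heu_all⟩ := two_edges hu2 (mem_ends_e_left G he)
  obtain ⟨ev, hev_ne, hev_mem, hev_all⟩ := two_edges hv2 (mem_ends_e_right G he)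
  have hfeu : f = eu := (heu_all f (mem_ends_e_left G hf)).resolve_left hfe
  have hfev : f = ev := (hev_all f (mem_ends_e_right G hf)).resolve_left hfe
  -- every edge is e or f, with ends s(u,v)
  have hedge_uv : ∀ g : E, u ∈ G.ends g ∨ v ∈ G.ends g → (g = e ∨ g = f) := by
    intro g hg
    rcases hg with hg | hg
    · rcases heu_all g hg with h' | h'
      · exact Or.inl h'
      · exact Or.inr (hfeu ▸ h')
    · rcases hev_all g hg with h' | h'
      · exact Or.inl h'
      · exact Or.inr (hfev ▸ h')
  have hends : ∀ g : E, g = e ∨ g = f → G.ends g = s(u, v) := by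
    rintro g (rfl | rfl)
    · exact he
    · exact hf
  -- every vertex is u or v
  have hvert : ∀ x : V, x = u ∨ x = v := by
    intro x
    have hx := hconn.2 u x
    clear hu2 hv2
    induction hx with
    | refl => exact Or.inl rfl
    | tail hab hstep ih =>
      obtain ⟨g, -, hg⟩ := hstep
      rename_i y z _
      have hguv : G.ends g = s(u, v) := by
        apply hends
        apply hedge_uv
        rcases ih with rfl | rfl
        · exact Or.inl (by rw [hg]; exact Sym2.mem_mk_left _ _)
        · exact Or.inr (by rw [hg]; exact Sym2.mem_mk_left _ _)
      rw [hguv] at hg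
      rcases Sym2.eq_iff.mp hg with ⟨-, h2⟩ | ⟨h1, -⟩
      · exact Or.inr h2.symm
      · exact Or.inl h1.symm
  -- every edge is e or f
  have hall : ∀ g : E, g = e ∨ g = f := by
    intro g
    apply hedge_uv
    obtain ⟨p, q, hpq⟩ := sym2_exists (G.ends g)
    have hne : p ≠ q := by
      have := G.loopless g
      rw [hpq, Sym2.mk_isDiag_iff] at this
      exact this
    rcases hvert p with rfl | rfl
    · exact Or.inl (by rw [hpq]; exact Sym2.mem_mk_left _ _)
    · exact Or.inr (by rw [hpq]; exact Sym2.mem_mk_left _ _)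
  refine ⟨{e}, {g | g ≠ e}, ?_, ?_, ⟨⟨⟨u⟩, ?_⟩, ?_⟩, ?_⟩
  · ext g
    simp only [Set.mem_union, Set.mem_singleton_iff, Set.mem_setOf_eq, Set.mem_univ, iff_true]
    by_cases hg : g = e
    · exact Or.inl hg
    · exact Or.inr hg
  · rw [Set.disjoint_left]
    rintro g rfl hg
    exact hg rfl
  · -- connectivity via e
    intro x y
    have hstep : G.AdjOn {e} u v := ⟨e, rfl, he⟩
    rcases hvert x with rfl | rfl <;> rcases hvert y with rfl | rfl
    · exact Relation.ReflTransGen.refl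
    · exact Relation.ReflTransGen.single hstep
    · exact Relation.ReflTransGen.single (adjOn_symm hstep)
    · exact Relation.ReflTransGen.refl
  · -- no cycle inside {e}
    rintro ⟨l, hcyc, hsub⟩
    obtain ⟨h1, h2, h3, h4⟩ := hcyc
    have h0 : 0 < l.length := by omega
    have h1' : 1 < l.length := by omega
    have he0 : (l[0]'h0).2 = e := hsub _ (List.getElem_mem h0)
    have he1 : (l[1]'h1').2 = e := hsub _ (List.getElem_mem h1')
    have g0 : (l.map Prod.snd)[0]'(by simp only [List.length_map]; omega) = e := by
      simp only [List.getElem_map]; exact he0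
    have g1 : (l.map Prod.snd)[1]'(by simp only [List.length_map]; omega) = e := by
      simp only [List.getElem_map]; exact he1
    have := (List.Nodup.getElem_inj_iff h2).mp (g0.trans g1.symm)
    omega
  · -- matching
    rintro g hg k hk hne x ⟨hxg, hxk⟩
    have hgf : g = f := (hall g).resolve_left hg
    have hkf : k = f := (hall k).resolve_left hk
    exact hne (hgf.trans hkf.symm)

end Contract

lemma nat_card_ne {α : Type} [Finite α] (a : α) :
    Nat.card {x : α // x ≠ a} = Nat.card α - 1 := by
  classical
  haveI := Fintype.ofFinite α
  rw [Nat.card_eq_fintype_card, Nat.card_eq_fintype_card]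
  have h1 : Fintype.card {x : α // ¬ x = a} = Fintype.card α - Fintype.card {x : α // x = a} :=
    Fintype.card_subtype_compl _
  have h2 : Fintype.card {x : α // x = a} = 1 := Fintype.card_subtype_eq a
  rw [h2] at h1
  convert h1 using 2

end Multigraph

open Multigraph in
/-- In a minimum counterexample in `S_{1,3}` to the
2-Decomposition Conjecture, no two vertices of degree 2 are adjacent. -/
theorem stmt_11 {V E : Type} [Finite V] [Finite E] (G : Multigraph V E)
    (hG : G.MinCex) :
    ∀ u v : V, G.deg u = 2 → G.deg v = 2 → ¬ G.Adj u v := by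
  intro u v hu2 hv2 hadj
  obtain ⟨e, -, he⟩ := hadj
  have huv : u ≠ v := by
    have := G.loopless e
    rw [he, Sym2.mk_isDiag_iff] at this
    exact this
  obtain ⟨hS13, hTM, hmin⟩ := hG
  by_cases hpar : ∀ f, G.ends f = s(u, v) → f = e
  · -- no parallel edge: contract e
    have hconn' : (contract huv G he hpar).Connected := by
      refine ⟨⟨⟨u, huv⟩⟩, fun a b => ?_⟩
      have := proj_rtg huv G hpar he (hS13.1.2 a.val b.val)
      rwa [cmap_val huv a, cmap_val huv b] at this
    have hdeg' : ∀ a, 1 ≤ (contract huv G he hpar).deg a ∧ (contract huv G he hpar).deg a ≤ 3 := by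
      intro a
      by_cases ha : a = ⟨u, huv⟩
      · subst ha
        rw [deg_contract_u huv G hpar he hu2 hv2]
        omega
      · rw [deg_contract_other huv G hpar he ha]
        exact hS13.2.1 a.val
    have hsep' : (contract huv G he hpar).Separating :=
      contract_separating huv G hpar he hS13.2.2 hu2 hv2
    have hS13' : (contract huv G he hpar).S13 := ⟨hconn', hdeg', hsep'⟩
    have hphi : (contract huv G he hpar).phi < G.phi := by
      unfold phi
      rw [nat_card_ne v, nat_card_ne e]
      have hV : 0 < Nat.card V := @Nat.card_pos _ ⟨u⟩ _
      have hE : 0 < Nat.card E := @Nat.card_pos _ ⟨e⟩ _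
      omega
    have hHTM : (contract huv G he hpar).HasTM := by
      by_contra hn
      have := hmin _ _ inferInstance inferInstance (contract huv G he hpar) hS13' hn
      omega
    exact hTM (hasTM_of_contract huv G hpar he hu2 hv2 hHTM)
  · push_neg at hpar
    obtain ⟨f, hf, hfe⟩ := hpar
    exact hTM (hasTM_of_parallel G he hfe hf hS13.1 hu2 hv2)
end

section
/- A minimum counterexample G ∈ S_{1,3} to the 2-Decomposition Conjecture contains a cycle all of whose vertices have degree 3 in G. -/
namespace Multigraph

variable {V E : Type}

set_option linter.unusedSectionVars false
set_option maxHeartbeats 1000000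

section Aux
variable (G : Multigraph V E)

/-- The set of edges incident to `v`. -/
def inc (v : V) : Set E := {e | v ∈ G.ends e}

variable [Finite E]

lemma deg_eq_ncard (v : V) : G.deg v = (G.inc v).ncard := by
  rw [deg, ← Nat.card_coe_set_eq]; rfl

lemma ends_eq (e : E) : ∃ x y : V, G.ends e = s(x, y) ∧ x ≠ y := by
  have : ∃ x y, G.ends e = s(x, y) := by
    induction (G.ends e) using Sym2.ind with
    | _ x y => exact ⟨x, y, rfl⟩
  obtain ⟨x, y, h⟩ := this
  refine ⟨x, y, h, ?_⟩
  intro hxy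
  exact G.loopless e (by rw [h, hxy]; exact Sym2.isDiag_iff_proj_eq |>.mpr rfl)

lemma ne_of_ends {e : E} {x y : V} (h : G.ends e = s(x, y)) : x ≠ y := by
  intro hxy
  exact G.loopless e (by rw [h, hxy]; exact Sym2.isDiag_iff_proj_eq |>.mpr rfl)

lemma deg_ge_two {v : V} {e f : E} (he : v ∈ G.ends e) (hf : v ∈ G.ends f)
    (hef : e ≠ f) : 2 ≤ G.deg v := by
  rw [deg_eq_ncard]
  have h1 : ({e, f} : Set E) ⊆ G.inc v := by
    intro x hx; rcases hx with h | h <;> simp_all [inc]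
  calc 2 = ({e, f} : Set E).ncard := (Set.ncard_pair hef).symm
    _ ≤ _ := Set.ncard_le_ncard h1 (Set.toFinite _)

lemma deg_pos {v : V} {e : E} (he : v ∈ G.ends e) : 1 ≤ G.deg v := by
  rw [deg_eq_ncard]
  have : G.inc v ≠ ∅ := by intro h; rw [Set.eq_empty_iff_forall_notMem] at h; exact h e he
  have := Set.nonempty_iff_ne_empty.mpr this
  exact (Set.ncard_pos (Set.toFinite _)).mpr this

/-- At a degree-2 vertex with a known incident edge, there is exactly one other
edge, and every incident edge is one of the two. -/
lemma deg_two_structure {v : V} {e : E} (he : v ∈ G.ends e) (h2 : G.deg v = 2) :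
    ∃ f : E, f ≠ e ∧ v ∈ G.ends f ∧ ∀ g : E, v ∈ G.ends g → g = e ∨ g = f := by
  rw [deg_eq_ncard] at h2
  obtain ⟨a, b, hab, hs⟩ := Set.ncard_eq_two.mp h2
  have hea : e ∈ ({a, b} : Set E) := hs ▸ he
  rcases hea with rfl | rfl
  · exact ⟨b, hab.symm, by have : b ∈ G.inc v := hs ▸ (by simp); exact this,
      fun g hg => by have : g ∈ ({e, b} : Set E) := hs ▸ hg; simpa using this⟩
  · exact ⟨a, hab, by have : a ∈ G.inc v := hs ▸ (by simp); exact this,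
      fun g hg => by have : g ∈ ({a, e} : Set E) := hs ▸ hg; rcases (by simpa using this : g = a ∨ g = e) with h|h
                     · exact Or.inr h
                     · exact Or.inl h⟩

lemma deg_three_structure {v : V} {e f g : E} (he : v ∈ G.ends e) (hf : v ∈ G.ends f)
    (hg : v ∈ G.ends g) (hef : e ≠ f) (heg : e ≠ g) (hfg : f ≠ g) (h3 : G.deg v ≤ 3) :
    ∀ x : E, v ∈ G.ends x → x = e ∨ x = f ∨ x = g := by
  intro x hx
  by_contra hcon
  push_neg at hcon
  obtain ⟨hxe, hxf, hxg⟩ := hcon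
  have hsub : ({x, e, f, g} : Set E) ⊆ G.inc v := by
    intro y hy; simp only [Set.mem_insert_iff, Set.mem_singleton_iff] at hy
    rcases hy with rfl|rfl|rfl|rfl <;> assumption
  have hc : ({x, e, f, g} : Set E).ncard = 4 := by
    rw [Set.ncard_insert_of_notMem (by simp [hxe, hxf, hxg]) (Set.toFinite _),
        Set.ncard_insert_of_notMem (by simp [hef, heg]) (Set.toFinite _),
        Set.ncard_insert_of_notMem (by simp [hfg]) (Set.toFinite _),
        Set.ncard_singleton]
  have := Set.ncard_le_ncard hsub (Set.toFinite _)
  rw [hc, ← deg_eq_ncard] at this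
  omega

lemma other_end {e : E} {w : V} (h : w ∈ G.ends e) :
    ∃ y : V, G.ends e = s(w, y) ∧ y ≠ w := by
  obtain ⟨p, q, hpq, hpqne⟩ := G.ends_eq e
  rw [hpq] at h
  rcases Sym2.mem_iff.mp h with h' | h'
  · exact ⟨q, by rw [h']; exact hpq, fun hq => hpqne ((hq.trans h').symm)⟩
  · exact ⟨p, by rw [h']; exact hpq.trans (Sym2.eq_swap), fun hp' => hpqne (hp'.trans h')⟩

end Aux

section RTG
variable (G : Multigraph V E)

lemma adjOn_swap {S : Set E} {u v : V} (h : G.AdjOn S u v) : G.AdjOn S v u := by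
  obtain ⟨e, he, hends⟩ := h
  exact ⟨e, he, by rw [hends, Sym2.eq_swap]⟩

lemma adjOn_symm_s16 (S : Set E) : Symmetric (G.AdjOn S) := fun _ _ h => G.adjOn_swap h

lemma rtg_symm {S : Set E} {u v : V} (h : Relation.ReflTransGen (G.AdjOn S) u v) :
    Relation.ReflTransGen (G.AdjOn S) v u :=
  by haveI : Std.Symm (G.AdjOn S) := ⟨fun a b h => G.adjOn_symm_s16 S h⟩; exact Relation.ReflTransGen.symmetric.symm _ _ h

lemma rtg_replace {S S' : Set E} {u v : V}
    (h : Relation.ReflTransGen (G.AdjOn S) u v)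
    (hrep : ∀ a b : V, G.AdjOn S a b → Relation.ReflTransGen (G.AdjOn S') a b) :
    Relation.ReflTransGen (G.AdjOn S') u v := by
  induction h with
  | refl => exact Relation.ReflTransGen.refl
  | tail _ hstep ih => exact ih.trans (hrep _ _ hstep)

/-- Closed-set lemma: a set of vertices closed under `S`-edges absorbs
reachability. -/
lemma closed_set {S : Set E} {C : Set V}
    (hC : ∀ e ∈ S, ∀ x y : V, G.ends e = s(x, y) → x ∈ C → y ∈ C)
    {u v : V} (h : Relation.ReflTransGen (G.AdjOn S) u v) (hu : u ∈ C) : v ∈ C := by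
  induction h with
  | refl => exact hu
  | tail _ hstep ih => obtain ⟨e, he, hends⟩ := hstep; exact hC e he _ _ hends ih

end RTG

section Cyc


/-- vertex of the cycle at (cyclic) index m -/
def cvtx (c : List (V × E)) (hpos : 0 < c.length) (m : ℕ) : V :=
  (c.get ⟨m % c.length, Nat.mod_lt _ hpos⟩).1

/-- edge of the cycle at (cyclic) index m -/
def cedg (c : List (V × E)) (hpos : 0 < c.length) (m : ℕ) : E :=
  (c.get ⟨m % c.length, Nat.mod_lt _ hpos⟩).2

variable {G : Multigraph V E} {c : List (V × E)} (hpos : 0 < c.length)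

lemma cvtx_mod (m : ℕ) : cvtx c hpos (m % c.length) = cvtx c hpos m := by
  simp [cvtx, Nat.mod_mod]

lemma cedg_mod (m : ℕ) : cedg c hpos (m % c.length) = cedg c hpos m := by
  simp [cedg, Nat.mod_mod]

lemma cvtx_add_len (m : ℕ) : cvtx c hpos (m + c.length) = cvtx c hpos m := by
  simp [cvtx, Nat.add_mod_right]

lemma cedg_add_len (m : ℕ) : cedg c hpos (m + c.length) = cedg c hpos m := by
  simp [cedg, Nat.add_mod_right]

lemma cyc_rel (hc : G.IsCycle c) (m : ℕ) :
    G.ends (cedg c hpos m) = s(cvtx c hpos m, cvtx c hpos (m + 1)) := by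
  have h2 := hc.2.2.1
  have h := hc.2.2.2 ⟨m % c.length, Nat.mod_lt _ hpos⟩
  have hidx : (m % c.length + 1) % c.length = (m + 1) % c.length := by
    conv_rhs => rw [Nat.add_mod]
    rw [Nat.mod_eq_of_lt (show 1 < c.length by omega)]
  have hget : c.get ⟨(m % c.length + 1) % c.length, Nat.mod_lt _ hpos⟩
      = c.get ⟨(m + 1) % c.length, Nat.mod_lt _ hpos⟩ := by
    congr 1
    exact Fin.ext hidx
  simp only [cvtx, cedg]
  rw [h]
  exact congrArg (fun p : V × E => s((c.get ⟨m % c.length, Nat.mod_lt _ hpos⟩).1, p.1)) hget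

lemma cvtx_mem_cedg (hc : G.IsCycle c) (m : ℕ) :
    cvtx c hpos m ∈ G.ends (cedg c hpos m) := by
  rw [cyc_rel hpos hc m]; exact Sym2.mem_mk_left _ _

lemma cvtx_succ_mem_cedg (hc : G.IsCycle c) (m : ℕ) :
    cvtx c hpos (m + 1) ∈ G.ends (cedg c hpos m) := by
  rw [cyc_rel hpos hc m]; exact Sym2.mem_mk_right _ _

lemma cedg_inj (hc : G.IsCycle c) {a b : ℕ} (h : cedg c hpos a = cedg c hpos b) :
    a % c.length = b % c.length := by
  have hn := List.nodup_iff_injective_get.mp hc.2.1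
  have ha : (c.map Prod.snd).get ⟨a % c.length, by simpa using Nat.mod_lt _ hpos⟩
      = cedg c hpos a := by
    rw [List.get_eq_getElem, List.getElem_map]; rfl
  have hb : (c.map Prod.snd).get ⟨b % c.length, by simpa using Nat.mod_lt _ hpos⟩
      = cedg c hpos b := by
    rw [List.get_eq_getElem, List.getElem_map]; rfl
  have := hn (ha.trans (h.trans hb.symm))
  exact congrArg Fin.val (by exact this)

lemma cvtx_inj (hc : G.IsCycle c) {a b : ℕ} (h : cvtx c hpos a = cvtx c hpos b) :
    a % c.length = b % c.length := by
  have hn := List.nodup_iff_injective_get.mp hc.1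
  have ha : (c.map Prod.fst).get ⟨a % c.length, by simpa using Nat.mod_lt _ hpos⟩
      = cvtx c hpos a := by
    rw [List.get_eq_getElem, List.getElem_map]; rfl
  have hb : (c.map Prod.fst).get ⟨b % c.length, by simpa using Nat.mod_lt _ hpos⟩
      = cvtx c hpos b := by
    rw [List.get_eq_getElem, List.getElem_map]; rfl
  have := hn (ha.trans (h.trans hb.symm))
  exact congrArg Fin.val (by exact this)

lemma mem_cycle_iff (p : V × E) :
    p ∈ c ↔ ∃ m : ℕ, m < c.length ∧ p = (cvtx c hpos m, cedg c hpos m) := by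
  rw [List.mem_iff_get]
  constructor
  · rintro ⟨i, rfl⟩
    exact ⟨i, i.isLt, by simp [cvtx, cedg, Nat.mod_eq_of_lt i.isLt]⟩
  · rintro ⟨m, hm, rfl⟩
    exact ⟨⟨m % c.length, Nat.mod_lt _ hpos⟩, by simp [cvtx, cedg]⟩

lemma mem_cycle_edges_iff (e : E) :
    e ∈ c.map Prod.snd ↔ ∃ m : ℕ, m < c.length ∧ e = cedg c hpos m := by
  rw [List.mem_map]
  constructor
  · rintro ⟨p, hp, rfl⟩
    obtain ⟨m, hm, rfl⟩ := (mem_cycle_iff hpos p).mp hp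
    exact ⟨m, hm, rfl⟩
  · rintro ⟨m, hm, rfl⟩
    exact ⟨(cvtx c hpos m, cedg c hpos m), (mem_cycle_iff hpos _).mpr ⟨m, hm, rfl⟩, rfl⟩

/-- two distinct edges of the cycle at each cycle vertex -/
lemma cyc_two_edges_at (hc : G.IsCycle c) (m : ℕ) :
    cedg c hpos m ≠ cedg c hpos (m + c.length - 1) ∧
    cvtx c hpos m ∈ G.ends (cedg c hpos m) ∧
    cvtx c hpos m ∈ G.ends (cedg c hpos (m + c.length - 1)) := by
  have h2 := hc.2.2.1
  refine ⟨?_, cvtx_mem_cedg hpos hc m, ?_⟩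
  · intro h
    have := cedg_inj hpos hc h
    -- m % n = (m + n - 1) % n  is impossible for n ≥ 2
    have hn : 0 < c.length := hpos
    set n := c.length
    have e1 : (m + n - 1) = (m % n + n - 1) + (m / n) * n := by
      have h := Nat.mod_add_div m n
      rw [mul_comm] at h
      omega
    have e2 : (m + n - 1) % n = (m % n + n - 1) % n := by
      rw [e1, Nat.add_mul_mod_self_right]
    rw [e2] at this
    have hr : m % n < n := Nat.mod_lt _ hpos
    set r := m % n
    rcases Nat.eq_zero_or_pos r with h0 | h0
    · rw [h0] at this
      rw [Nat.zero_add, Nat.mod_eq_of_lt (by omega)] at this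
      omega
    · have : r = (r + n - 1) % n := this
      rw [show r + n - 1 = (r - 1) + n by omega, Nat.add_mod_right,
        Nat.mod_eq_of_lt (by omega)] at this
      omega
  · have : cvtx c hpos (m + c.length - 1 + 1) ∈ G.ends (cedg c hpos (m + c.length - 1)) :=
      cvtx_succ_mem_cedg hpos hc _
    rwa [show m + c.length - 1 + 1 = m + c.length by omega, cvtx_add_len] at this

/-- Walk lemma: going around the cycle avoiding edge at index k connects the
endpoints of that edge. -/
lemma cycle_walk (hc : G.IsCycle c) (k : ℕ) (S : Set E)
    (hS : ∀ j : ℕ, j % c.length ≠ k % c.length → cedg c hpos j ∈ S) :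
    Relation.ReflTransGen (G.AdjOn S) (cvtx c hpos (k + 1)) (cvtx c hpos k) := by
  have h2 := hc.2.2.1
  set n := c.length with hn
  have key : ∀ m : ℕ, m ≤ n - 1 →
      Relation.ReflTransGen (G.AdjOn S) (cvtx c hpos (k + 1)) (cvtx c hpos (k + 1 + m)) := by
    intro m
    induction m with
    | zero => intro _; exact Relation.ReflTransGen.refl
    | succ m ih =>
      intro hm
      refine Relation.ReflTransGen.tail (ih (by omega)) ?_
      refine ⟨cedg c hpos (k + 1 + m), hS _ ?_, ?_⟩
      · -- (k+1+m) % n ≠ k % n since 1 ≤ 1+m ≤ n-1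
        intro h
        have e1 : (k + 1 + m) % n = (k % n + (1 + m)) % n := by
          conv_lhs => rw [show k + 1 + m = k + (1+m) by omega, Nat.add_mod]
          conv_rhs => rw [Nat.add_mod, Nat.mod_mod_of_dvd _ dvd_rfl]
        have hr : k % n < n := Nat.mod_lt _ hpos
        set r := k % n
        rw [e1] at h
        rcases Nat.lt_or_ge (r + (1 + m)) n with hlt | hge
        · rw [Nat.mod_eq_of_lt hlt] at h; omega
        · have : r + (1 + m) - n < n := by omega
          rw [show r + (1+m) = (r + (1+m) - n) + n by omega, Nat.add_mod_right,
            Nat.mod_eq_of_lt this] at h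
          omega
      · have := cyc_rel hpos hc (k + 1 + m)
        rw [this]
        norm_num [show k + 1 + m + 1 = k + 1 + (m+1) by omega]
  have := key (n - 1) (le_refl _)
  rwa [show k + 1 + (n - 1) = k + n by omega, cvtx_add_len] at this

end Cyc

section Endgame

variable [Finite V] [Finite E] (G : Multigraph V E)

/-- Among finite sets satisfying `P`, there is a minimal one below any given one. -/
lemma exists_minimal_subset (P : Set E → Prop) :
    ∀ (n : ℕ) (S : Set E), S.ncard ≤ n → P S →
      ∃ T, T ⊆ S ∧ P T ∧ ∀ U, U ⊆ T → P U → U = T := by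
  intro n
  induction n with
  | zero =>
    intro S hS hP
    have hSe : S = ∅ := (Set.ncard_eq_zero (Set.toFinite S)).mp (Nat.le_zero.mp hS)
    refine ⟨S, subset_rfl, hP, fun U hU _ => ?_⟩
    rw [hSe] at hU ⊢
    exact Set.subset_empty_iff.mp hU
  | succ n ih =>
    intro S hS hP
    by_cases h : ∃ U, U ⊂ S ∧ P U
    · obtain ⟨U, hUS, hPU⟩ := h
      have hcard : U.ncard ≤ n := by
        have h1 : U.ncard < S.ncard := Set.ncard_lt_ncard hUS (Set.toFinite S)
        omega
      obtain ⟨T, hT1, hT2, hT3⟩ := ih U hcard hPU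
      exact ⟨T, hT1.trans hUS.subset, hT2, hT3⟩
    · push_neg at h
      refine ⟨S, subset_rfl, hP, fun U hU hPU => ?_⟩
      by_contra hne
      exact h U ⟨hU, fun hsu => hne (hU.antisymm hsu)⟩ hPU

/-- The endgame: a spectacle-free graph satisfying the hypotheses has a
tree–matching decomposition. -/
theorem endgame (hconn : G.Connected) (hdeg : ∀ v, G.deg v ≤ 3)
    (hno : ¬ ∃ c, G.IsCycle c ∧ ∀ p ∈ c, G.deg p.1 = 3)
    (hspec : ¬ ∃ (w a : V) (d₁ d₂ : E), d₁ ≠ d₂ ∧ G.ends d₁ = s(w, a) ∧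
      G.ends d₂ = s(w, a) ∧ G.deg w = 2) :
    G.HasTM := by
  classical
  set F3 : Set E := {e : E | ∀ x ∈ G.ends e, G.deg x = 3} with hF3def
  obtain ⟨T, -, ⟨hF3T, hT2⟩, hmin⟩ :=
    exists_minimal_subset (fun S => F3 ⊆ S ∧ G.ConnOn S) (Set.univ : Set E).ncard
      Set.univ le_rfl ⟨Set.subset_univ _, hconn⟩
  -- T contains no cycle
  have hTnc : ¬ ∃ c, G.IsCycle c ∧ ∀ p ∈ c, p.2 ∈ T := by
    rintro ⟨Z, hZ, hZT⟩
    have hlen := hZ.2.2.1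
    have hpos : 0 < Z.length := by omega
    have hnall : ¬ ∀ p ∈ Z, G.deg p.1 = 3 := fun h => hno ⟨Z, hZ, h⟩
    push_neg at hnall
    obtain ⟨p, hpZ, hp3⟩ := hnall
    obtain ⟨m, hm, rfl⟩ := (mem_cycle_iff hpos p).mp hpZ
    obtain ⟨hne2, hmem1, hmem2⟩ := cyc_two_edges_at hpos hZ m
    have hdv2 : G.deg (cvtx Z hpos m) = 2 := by
      have h2 := G.deg_ge_two hmem1 hmem2 hne2
      have h3 := hdeg (cvtx Z hpos m)
      simp only at hp3
      omega
    set ζ := cedg Z hpos m with hζdef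
    have hζT : ζ ∈ T := hZT _ ((mem_cycle_iff hpos _).mpr ⟨m, hm, rfl⟩)
    have hζF : ζ ∉ F3 := by
      intro hζ
      have := hζ (cvtx Z hpos m) (cvtx_mem_cedg hpos hZ m)
      omega
    have hconn' : G.ConnOn (T \ {ζ}) := by
      refine ⟨hT2.1, fun u v => ?_⟩
      refine G.rtg_replace (hT2.2 u v) ?_
      rintro a b ⟨g, hgT, hends⟩
      by_cases hgζ : g = ζ
      · subst hgζ
        have h1 := cyc_rel hpos hZ m
        rw [hends] at h1
        have hwalk : Relation.ReflTransGen (G.AdjOn (T \ {ζ}))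
            (cvtx Z hpos (m + 1)) (cvtx Z hpos m) := by
          refine cycle_walk hpos hZ m (T \ {ζ}) ?_
          intro j hj
          constructor
          · have hjm : cedg Z hpos j = cedg Z hpos (j % Z.length) := (cedg_mod hpos j).symm
            rw [hjm]
            exact hZT _ ((mem_cycle_iff hpos _).mpr
              ⟨j % Z.length, Nat.mod_lt _ hpos, rfl⟩)
          · intro hbad
            exact hj (cedg_inj hpos hZ hbad)
        rcases Sym2.eq_iff.mp h1 with ⟨ha, hb⟩ | ⟨ha, hb⟩
        · subst ha; subst hb; exact G.rtg_symm hwalk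
        · subst ha; subst hb; exact hwalk
      · exact Relation.ReflTransGen.single ⟨g, ⟨hgT, hgζ⟩, hends⟩
    have heq : T \ {ζ} = T := by
      refine hmin _ Set.diff_subset ⟨?_, hconn'⟩
      intro e heF
      exact ⟨hF3T heF, fun he => hζF (he ▸ heF)⟩
    have : ζ ∈ T \ {ζ} := heq.symm ▸ hζT
    exact this.2 rfl
  -- structure of non-tree edges
  have hM0 : ∀ e : E, e ∉ T → ∃ (w x y : V) (e' : E),
      G.ends e = s(w, x) ∧ G.deg w = 2 ∧ e' ≠ e ∧ e' ∈ T ∧ G.ends e' = s(w, y) ∧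
      (∀ g : E, w ∈ G.ends g → g = e ∨ g = e') ∧ x ≠ w ∧ y ≠ w ∧ x ≠ y := by
    intro e he
    obtain ⟨α, β, hends, hαβ⟩ := G.ends_eq e
    -- core argument, for an endpoint w of e with deg w ≠ 3 and other endpoint x
    have core : ∀ w x : V, G.ends e = s(w, x) → x ≠ w → G.deg w ≠ 3 →
        ∃ (y : V) (e' : E),
        G.deg w = 2 ∧ e' ≠ e ∧ e' ∈ T ∧ G.ends e' = s(w, y) ∧
        (∀ g : E, w ∈ G.ends g → g = e ∨ g = e') ∧ x ≠ w ∧ y ≠ w ∧ x ≠ y := by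
      intro w x hwx hxw h3
      have hwmem : w ∈ G.ends e := by rw [hwx]; exact Sym2.mem_mk_left _ _
      have hd1 := G.deg_pos hwmem
      have hd3 := hdeg w
      have hdw2 : G.deg w = 2 := by
        rcases Nat.lt_or_ge (G.deg w) 2 with h | h
        · exfalso
          have hdw1 : G.deg w = 1 := by omega
          -- unique edge at w
          have huniq1 : ∀ g, w ∈ G.ends g → g = e := by
            rw [deg_eq_ncard] at hdw1
            obtain ⟨g₀, hg₀⟩ := Set.ncard_eq_one.mp hdw1
            intro g hg
            have h1 : g ∈ G.inc w := hg
            have h2 : e ∈ G.inc w := hwmem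
            rw [hg₀] at h1 h2
            rw [Set.mem_singleton_iff.mp h1, Set.mem_singleton_iff.mp h2]
          have hclosed := G.closed_set (S := T) (C := {w})
            (by intro g hgT p q hpq hp
                exfalso
                have hpw : p = w := Set.mem_singleton_iff.mp hp
                have hwg : w ∈ G.ends g := by rw [hpq, ← hpw]; exact Sym2.mem_mk_left _ _
                exact he (huniq1 g hwg ▸ hgT))
            (hT2.2 w x) rfl
          exact hxw (Set.mem_singleton_iff.mp hclosed)
        · omega
      obtain ⟨f, hfe, hfw, huniq⟩ := G.deg_two_structure hwmem hdw2
      have hfT : f ∈ T := by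
        by_contra hfnT
        have hclosed := G.closed_set (S := T) (C := {w})
          (by intro g hgT p q hpq hp
              exfalso
              have hpw : p = w := Set.mem_singleton_iff.mp hp
              have hwg : w ∈ G.ends g := by rw [hpq, ← hpw]; exact Sym2.mem_mk_left _ _
              rcases huniq g hwg with rfl | rfl
              · exact he hgT
              · exact hfnT hgT)
          (hT2.2 w x) rfl
        exact hxw (Set.mem_singleton_iff.mp hclosed)
      obtain ⟨p, q, hpq, hpqne⟩ := G.ends_eq f
      have hwpq : w ∈ G.ends f := hfw
      rw [hpq] at hwpq
      have hy : ∃ y : V, G.ends f = s(w, y) ∧ y ≠ w := by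
        rcases Sym2.mem_iff.mp hwpq with h | h
        · exact ⟨q, by rw [h]; exact hpq, fun hq => hpqne ((hq.trans h).symm)⟩
        · exact ⟨p, by rw [h]; exact hpq.trans (Sym2.eq_swap), fun hp' => hpqne (hp'.trans h)⟩
      obtain ⟨y, hfy, hyw⟩ := hy
      have hxy : x ≠ y := by
        intro hxy
        subst hxy
        exact hspec ⟨w, x, e, f, Ne.symm hfe, hwx, hfy, hdw2⟩
      exact ⟨y, f, hdw2, hfe, hfT, hfy, huniq, hxw, hyw, hxy⟩
    have hnotboth : ¬ (G.deg α = 3 ∧ G.deg β = 3) := by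
      rintro ⟨h1, h2⟩
      refine he (hF3T ?_)
      intro z hz
      rw [hends] at hz
      rcases Sym2.mem_iff.mp hz with rfl | rfl
      · exact h1
      · exact h2
    by_cases hα : G.deg α = 3
    · have hβ : G.deg β ≠ 3 := fun h => hnotboth ⟨hα, h⟩
      obtain ⟨y, e', hs⟩ := core β α (by rw [hends, Sym2.eq_swap]) hαβ hβ
      exact ⟨β, α, y, e', by rw [hends, Sym2.eq_swap], hs.1, hs.2.1, hs.2.2.1,
        hs.2.2.2.1, hs.2.2.2.2.1, hs.2.2.2.2.2.1, hs.2.2.2.2.2.2.1, hs.2.2.2.2.2.2.2⟩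
    · obtain ⟨y, e', hs⟩ := core α β hends (Ne.symm hαβ) hα
      exact ⟨α, β, y, e', hends, hs.1, hs.2.1, hs.2.2.1,
        hs.2.2.2.1, hs.2.2.2.2.1, hs.2.2.2.2.2.1, hs.2.2.2.2.2.2.1, hs.2.2.2.2.2.2.2⟩
  -- index type of non-tree edges, with chosen data
  have hM0' : ∀ i : {e : E // e ∉ T}, ∃ (w x y : V) (e' : E),
      G.ends i.val = s(w, x) ∧ G.deg w = 2 ∧ e' ≠ i.val ∧ e' ∈ T ∧
      G.ends e' = s(w, y) ∧ (∀ g : E, w ∈ G.ends g → g = i.val ∨ g = e') ∧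
      x ≠ w ∧ y ≠ w ∧ x ≠ y := fun i => hM0 i.val i.property
  choose wE xE yE eE' hieds hw2 hene he'T hieds' huniq hxw hyw hxy using hM0'
  -- injectivity of w
  have w_inj : ∀ i j : {e : E // e ∉ T}, wE i = wE j → i = j := by
    intro i j hw
    have h1 : wE i ∈ G.ends j.val := by rw [hw, hieds j]; exact Sym2.mem_mk_left _ _
    rcases huniq i _ h1 with h | h
    · exact Subtype.ext h.symm
    · exact absurd (by rw [h]; exact he'T i : j.val ∈ T) j.property
  have hxW : ∀ i j : {e : E // e ∉ T}, xE i ≠ wE j := by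
    intro i j h
    by_cases hij : i = j
    · subst hij; exact hxw i h
    have h1 : wE j ∈ G.ends i.val := by rw [hieds i, ← h]; exact Sym2.mem_mk_right _ _
    rcases huniq j _ h1 with h2 | h2
    · exact hij (Subtype.ext h2)
    · exact i.property (by rw [h2]; exact he'T j)
  have hyW : ∀ i j : {e : E // e ∉ T}, yE i ≠ wE j := by
    intro i j h
    by_cases hij : i = j
    · subst hij; exact hyw i h
    have h1 : wE j ∈ G.ends (eE' i) := by rw [hieds' i, ← h]; exact Sym2.mem_mk_right _ _
    rcases huniq j _ h1 with h2 | h2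
    · exact j.property (by rw [← h2]; exact he'T i)
    · -- eE' i = eE' j
      have heq : s(wE i, yE i) = s(wE j, yE j) := by rw [← hieds' i, h2, hieds' j]
      rcases Sym2.eq_iff.mp heq with ⟨ha, _⟩ | ⟨ha, hb⟩
      · exact hij (w_inj i j ha)
      · -- ha : wE i = yE j, hb : yE i = wE j; closed set {wE i, yE i}
        have hCclosed : ∀ g ∈ T, ∀ p q : V, G.ends g = s(p, q) →
            p ∈ ({wE i, yE i} : Set V) → q ∈ ({wE i, yE i} : Set V) := by
          intro g hgT p q hpq hp
          simp only [Set.mem_insert_iff, Set.mem_singleton_iff] at hp ⊢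
          have hq : q ∈ G.ends g := by rw [hpq]; exact Sym2.mem_mk_right _ _
          rcases hp with hp | hp
          · have hwg : wE i ∈ G.ends g := by rw [hpq, ← hp]; exact Sym2.mem_mk_left _ _
            rcases huniq i g hwg with h3 | h3
            · exact absurd (by rw [← h3]; exact hgT : i.val ∈ T) i.property
            · rw [h3, hieds' i] at hq
              exact Sym2.mem_iff.mp hq
          · have hwg : wE j ∈ G.ends g := by
              rw [hpq, hp, h]; exact Sym2.mem_mk_left _ _
            rcases huniq j g hwg with h3 | h3
            · exact absurd (by rw [← h3]; exact hgT : j.val ∈ T) j.property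
            · rw [h3, ← h2, hieds' i] at hq
              exact Sym2.mem_iff.mp hq
        have hout := G.closed_set hCclosed (hT2.2 (wE i) (xE i))
          (by left; rfl)
        rcases hout with hbad | hbad
        · exact hxw i hbad
        · exact hxy i (Set.mem_singleton_iff.mp hbad)
  -- carrier bound
  have carrier : ∀ (z : V) (i1 i2 i3 : {e : E // e ∉ T}), i1 ≠ i2 → i1 ≠ i3 → i2 ≠ i3 →
      (z = xE i1 ∨ z = yE i1) → (z = xE i2 ∨ z = yE i2) → (z = xE i3 ∨ z = yE i3) →
      False := by
    intro z i1 i2 i3 h12 h13 h23 hz1 hz2 hz3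
    have key : ∀ i : {e : E // e ∉ T}, (z = xE i ∨ z = yE i) → ∃ g : E, z ∈ G.ends g ∧
        ((g = i.val ∧ z = xE i) ∨ (g = eE' i ∧ z = yE i)) := by
      intro i hi
      rcases hi with hi | hi
      · exact ⟨i.val, by rw [hieds i, hi]; exact Sym2.mem_mk_right _ _, Or.inl ⟨rfl, hi⟩⟩
      · exact ⟨eE' i, by rw [hieds' i, hi]; exact Sym2.mem_mk_right _ _, Or.inr ⟨rfl, hi⟩⟩
    obtain ⟨g1, hg1z, hg1⟩ := key i1 hz1
    obtain ⟨g2, hg2z, hg2⟩ := key i2 hz2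
    obtain ⟨g3, hg3z, hg3⟩ := key i3 hz3
    have gdist : ∀ (i j : {e : E // e ∉ T}), i ≠ j → ∀ g g',
        ((g = i.val ∧ z = xE i) ∨ (g = eE' i ∧ z = yE i)) →
        ((g' = j.val ∧ z = xE j) ∨ (g' = eE' j ∧ z = yE j)) → g ≠ g' := by
      intro i j hij g g' hg hg' hgg
      rcases hg with ⟨rfl, hzi⟩ | ⟨rfl, hzi⟩ <;> rcases hg' with ⟨rfl, hzj⟩ | ⟨rfl, hzj⟩
      · exact hij (Subtype.ext hgg)
      · exact i.property (by rw [hgg]; exact he'T j)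
      · exact j.property (by rw [← hgg]; exact he'T i)
      · have heq : s(wE i, yE i) = s(wE j, yE j) := by rw [← hieds' i, hgg, hieds' j]
        rcases Sym2.eq_iff.mp heq with ⟨ha, _⟩ | ⟨_, hb⟩
        · exact hij (w_inj i j ha)
        · exact hyW i j hb
    have d12 := gdist i1 i2 h12 g1 g2 hg1 hg2
    have d13 := gdist i1 i3 h13 g1 g3 hg1 hg3
    have d23 := gdist i2 i3 h23 g2 g3 hg2 hg3
    have hz3edges := G.deg_three_structure hg1z hg2z hg3z d12 d13 d23 (hdeg z)
    set C : Set V := {u | u = z ∨ ((g1 = eE' i1 ∧ z = yE i1) ∧ u = wE i1) ∨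
        ((g2 = eE' i2 ∧ z = yE i2) ∧ u = wE i2) ∨
        ((g3 = eE' i3 ∧ z = yE i3) ∧ u = wE i3)} with hCdef
    have hzC : z ∈ C := Or.inl rfl
    have hCclosed : ∀ g ∈ T, ∀ p q : V, G.ends g = s(p, q) → p ∈ C → q ∈ C := by
      intro g hgT p q hpq hp
      have hq : q ∈ G.ends g := by rw [hpq]; exact Sym2.mem_mk_right _ _
      have sub : ∀ (i : {e : E // e ∉ T}) (gk : E),
          ((gk = i.val ∧ z = xE i) ∨ (gk = eE' i ∧ z = yE i)) → g = gk →
          (gk = eE' i ∧ z = yE i) ∧ (q = wE i ∨ q = z) := by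
        intro i gk hgk hggk
        rcases hgk with ⟨h1, _⟩ | ⟨h1, h2⟩
        · exact absurd (by rw [← h1, ← hggk]; exact hgT : i.val ∈ T) i.property
        · refine ⟨⟨h1, h2⟩, ?_⟩
          rw [hggk, h1, hieds' i] at hq
          rcases Sym2.mem_iff.mp hq with h | h
          · exact Or.inl h
          · exact Or.inr (by rw [h, h2])
      rcases hp with hp | ⟨⟨hk1, hk2⟩, hp⟩ | ⟨⟨hk1, hk2⟩, hp⟩ | ⟨⟨hk1, hk2⟩, hp⟩
      · -- p = z : g is one of the three
        have hzg : z ∈ G.ends g := by rw [hpq, ← hp]; exact Sym2.mem_mk_left _ _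
        rcases hz3edges g hzg with h | h | h
        · obtain ⟨hr, hq'⟩ := sub i1 g1 hg1 h
          rcases hq' with h' | h'
          · exact Or.inr (Or.inl ⟨hr, h'⟩)
          · exact Or.inl h'
        · obtain ⟨hr, hq'⟩ := sub i2 g2 hg2 h
          rcases hq' with h' | h'
          · exact Or.inr (Or.inr (Or.inl ⟨hr, h'⟩))
          · exact Or.inl h'
        · obtain ⟨hr, hq'⟩ := sub i3 g3 hg3 h
          rcases hq' with h' | h'
          · exact Or.inr (Or.inr (Or.inr ⟨hr, h'⟩))
          · exact Or.inl h'
      · -- p = wE i1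
        have hwg : wE i1 ∈ G.ends g := by rw [hpq, ← hp]; exact Sym2.mem_mk_left _ _
        rcases huniq i1 g hwg with h3 | h3
        · exact absurd (by rw [← h3]; exact hgT : (i1 : E) ∈ T) i1.property
        · rw [h3, hieds' i1] at hq
          rcases Sym2.mem_iff.mp hq with h | h
          · exact Or.inr (Or.inl ⟨⟨hk1, hk2⟩, h⟩)
          · exact Or.inl (by rw [h, hk2])
      · have hwg : wE i2 ∈ G.ends g := by rw [hpq, ← hp]; exact Sym2.mem_mk_left _ _
        rcases huniq i2 g hwg with h3 | h3
        · exact absurd (by rw [← h3]; exact hgT : (i2 : E) ∈ T) i2.property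
        · rw [h3, hieds' i2] at hq
          rcases Sym2.mem_iff.mp hq with h | h
          · exact Or.inr (Or.inr (Or.inl ⟨⟨hk1, hk2⟩, h⟩))
          · exact Or.inl (by rw [h, hk2])
      · have hwg : wE i3 ∈ G.ends g := by rw [hpq, ← hp]; exact Sym2.mem_mk_left _ _
        rcases huniq i3 g hwg with h3 | h3
        · exact absurd (by rw [← h3]; exact hgT : (i3 : E) ∈ T) i3.property
        · rw [h3, hieds' i3] at hq
          rcases Sym2.mem_iff.mp hq with h | h
          · exact Or.inr (Or.inr (Or.inr ⟨⟨hk1, hk2⟩, h⟩))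
          · exact Or.inl (by rw [h, hk2])
    -- find a vertex outside C and contradict
    have houtside : ∃ u : V, u ∉ C := by
      rcases hg1 with ⟨hgv1, hzx1⟩ | ⟨hgv1, hzy1⟩
      · -- use wE i1
        refine ⟨wE i1, ?_⟩
        rintro (h | ⟨⟨ha, _⟩, _⟩ | ⟨⟨_, _⟩, hb⟩ | ⟨⟨_, _⟩, hb⟩)
        · exact hxw i1 (by rw [← hzx1, h])
        · exact hene i1 (by rw [← hgv1, ha])
        · exact h12 (w_inj i1 i2 hb)
        · exact h13 (w_inj i1 i3 hb)
      · rcases hg2 with ⟨hgv2, hzx2⟩ | ⟨hgv2, hzy2⟩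
        · refine ⟨wE i2, ?_⟩
          rintro (h | ⟨⟨_, _⟩, hb⟩ | ⟨⟨ha, _⟩, _⟩ | ⟨⟨_, _⟩, hb⟩)
          · exact hxw i2 (by rw [← hzx2, h])
          · exact h12 (w_inj i2 i1 hb).symm
          · exact hene i2 (by rw [← hgv2, ha])
          · exact h23 (w_inj i2 i3 hb)
        · rcases hg3 with ⟨hgv3, hzx3⟩ | ⟨hgv3, hzy3⟩
          · refine ⟨wE i3, ?_⟩
            rintro (h | ⟨⟨_, _⟩, hb⟩ | ⟨⟨_, _⟩, hb⟩ | ⟨⟨ha, _⟩, _⟩)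
            · exact hxw i3 (by rw [← hzx3, h])
            · exact h13 (w_inj i3 i1 hb).symm
            · exact h23 (w_inj i3 i2 hb).symm
            · exact hene i3 (by rw [← hgv3, ha])
          · -- all right-cases: use xE i1
            refine ⟨xE i1, ?_⟩
            rintro (h | ⟨⟨_, _⟩, hb⟩ | ⟨⟨_, _⟩, hb⟩ | ⟨⟨_, _⟩, hb⟩)
            · exact hxy i1 (by rw [h, hzy1])
            · exact hxW i1 i1 hb
            · exact hxW i1 i2 hb
            · exact hxW i1 i3 hb
    obtain ⟨u, hu⟩ := houtside
    exact hu (G.closed_set hCclosed (hT2.2 z u) hzC)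
  -- Hall's theorem gives a system of distinct representatives
  haveI : Fintype {e : E // e ∉ T} := Fintype.ofFinite _
  set t : {e : E // e ∉ T} → Finset V := fun i => {xE i, yE i} with htdef
  have htcard : ∀ i, (t i).card = 2 := by
    intro i
    simp only [htdef]
    rw [Finset.card_insert_of_notMem (by simp [hxy i]), Finset.card_singleton]
  have hallcond : ∀ s : Finset {e : E // e ∉ T}, s.card ≤ (s.biUnion t).card := by
    intro s
    set N := s.biUnion t with hN
    have hfil : ∀ z ∈ N, (s.filter (fun i => z ∈ t i)).card ≤ 2 := by
      intro z _
      by_contra hcon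
      push_neg at hcon
      obtain ⟨i1, i2, i3, hi1, hi2, hi3, h12, h13, h23⟩ :=
        Finset.two_lt_card_iff.mp hcon
      have m1 := (Finset.mem_filter.mp hi1).2
      have m2 := (Finset.mem_filter.mp hi2).2
      have m3 := (Finset.mem_filter.mp hi3).2
      simp only [htdef, Finset.mem_insert, Finset.mem_singleton] at m1 m2 m3
      exact carrier z i1 i2 i3 h12 h13 h23 m1 m2 m3
    have hsub : ∀ i ∈ s, t i ⊆ N := fun i hi => Finset.subset_biUnion_of_mem t hi
    have e1 : ∀ i ∈ s, (t i).card = (N.filter (fun z => z ∈ t i)).card := by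
      intro i hi
      congr 1
      ext z
      simp only [Finset.mem_filter]
      exact ⟨fun h => ⟨hsub i hi h, h⟩, fun h => h.2⟩
    have e2 : ∑ i ∈ s, (t i).card = ∑ z ∈ N, (s.filter (fun i => z ∈ t i)).card := by
      rw [Finset.sum_congr rfl e1]
      simp only [Finset.card_filter]
      exact Finset.sum_comm
    have e3 : ∑ i ∈ s, (t i).card = 2 * s.card := by
      rw [Finset.sum_congr rfl (fun i _ => htcard i), Finset.sum_const, smul_eq_mul,
        Nat.mul_comm]
    have e4 : ∑ z ∈ N, (s.filter (fun i => z ∈ t i)).card ≤ 2 * N.card := by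
      calc ∑ z ∈ N, (s.filter (fun i => z ∈ t i)).card ≤ ∑ _z ∈ N, 2 :=
            Finset.sum_le_sum hfil
        _ = 2 * N.card := by rw [Finset.sum_const, smul_eq_mul, Nat.mul_comm]
    omega
  obtain ⟨σ, hσinj, hσmem⟩ :=
    (Finset.all_card_le_biUnion_card_iff_exists_injective t).mp hallcond
  have hσor : ∀ i, σ i = xE i ∨ σ i = yE i := by
    intro i
    have := hσmem i
    simp only [htdef, Finset.mem_insert, Finset.mem_singleton] at this
    exact this
  -- the dropped edges
  set drop : {e : E // e ∉ T} → E := fun i => if σ i = xE i then i.val else eE' i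
    with hdropdef
  have hdropends : ∀ i, G.ends (drop i) = s(wE i, σ i) := by
    intro i
    by_cases h : σ i = xE i
    · simp only [hdropdef, if_pos h]; rw [hieds i, h]
    · simp only [hdropdef, if_neg h]
      rcases hσor i with h' | h'
      · exact absurd h' h
      · rw [hieds' i, h']
  set Mstar : Set E := Set.range drop with hMdef
  set Tstar : Set E := Mstarᶜ with hTsdef
  -- basic membership facts
  have hswap_mem : ∀ i, σ i ≠ xE i → eE' i ∈ Mstar := by
    intro i h
    exact ⟨i, by simp only [hdropdef, if_neg h]⟩
  have hival_not_M : ∀ i, σ i ≠ xE i → i.val ∉ Mstar := by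
    intro i h hmem
    obtain ⟨j, hj⟩ := hmem
    by_cases hj' : σ j = xE j
    · simp only [hdropdef, if_pos hj'] at hj
      have : j = i := Subtype.ext hj
      subst this
      exact h hj'
    · simp only [hdropdef, if_neg hj'] at hj
      exact i.property (by rw [← hj]; exact he'T j)
  have hT_in_M : ∀ g ∈ T, g ∈ Mstar → ∃ i, σ i ≠ xE i ∧ g = eE' i := by
    intro g hgT hmem
    obtain ⟨j, hj⟩ := hmem
    by_cases hj' : σ j = xE j
    · simp only [hdropdef, if_pos hj'] at hj
      exact absurd (show (j : E) ∈ T by rw [hj]; exact hgT) j.property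
    · simp only [hdropdef, if_neg hj'] at hj
      exact ⟨j, hj', hj.symm⟩
  -- the rehanging map
  set ρ : V → V := fun u =>
    if h : ∃ i : {e : E // e ∉ T}, σ i ≠ xE i ∧ u = wE i then yE h.choose else u
    with hρdef
  have hρ_w : ∀ i, σ i ≠ xE i → ρ (wE i) = yE i := by
    intro i h
    have hex : ∃ j : {e : E // e ∉ T}, σ j ≠ xE j ∧ wE i = wE j := ⟨i, h, rfl⟩
    simp only [hρdef, dif_pos hex]
    have hspec := hex.choose_spec
    have : hex.choose = i := (w_inj _ _ hspec.2.symm)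
    rw [this]
  have hρ_nw : ∀ u : V, (∀ i : {e : E // e ∉ T}, σ i ≠ xE i → u ≠ wE i) → ρ u = u := by
    intro u hu
    have hnex : ¬ ∃ i : {e : E // e ∉ T}, σ i ≠ xE i ∧ u = wE i := by
      rintro ⟨i, h1, h2⟩
      exact hu i h1 h2
    simp only [hρdef, dif_neg hnex]
  have hρ_x : ∀ i, ρ (xE i) = xE i := fun i => hρ_nw _ (fun j _ => hxW i j)
  have hρ_y : ∀ i, ρ (yE i) = yE i := fun i => hρ_nw _ (fun j _ => hyW i j)
  -- lifting steps from T to Tstar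
  have lift : ∀ a b : V, G.AdjOn T a b →
      Relation.ReflTransGen (G.AdjOn Tstar) (ρ a) (ρ b) := by
    rintro a b ⟨g, hgT, hgends⟩
    by_cases hg : ∃ i, σ i ≠ xE i ∧ g = eE' i
    · obtain ⟨i, hsw, rfl⟩ := hg
      have h1 : s(a, b) = s(wE i, yE i) := by rw [← hgends, hieds' i]
      rcases Sym2.eq_iff.mp h1 with ⟨ha, hb⟩ | ⟨ha, hb⟩
      · rw [ha, hb, hρ_w i hsw, hρ_y i]
      · rw [ha, hb, hρ_w i hsw, hρ_y i]
    · push_neg at hg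
      have hgTs : g ∈ Tstar := by
        intro hmem
        obtain ⟨i, h1, h2⟩ := hT_in_M g hgT hmem
        exact hg i h1 h2
      have hρa : ρ a = a := by
        refine hρ_nw a ?_
        intro i hi hai
        have hwg : wE i ∈ G.ends g := by rw [hgends, ← hai]; exact Sym2.mem_mk_left _ _
        rcases huniq i g hwg with h3 | h3
        · exact i.property (by rw [← h3]; exact hgT)
        · exact hg i hi h3
      have hρb : ρ b = b := by
        refine hρ_nw b ?_
        intro i hi hbi
        have hwg : wE i ∈ G.ends g := by rw [hgends, ← hbi]; exact Sym2.mem_mk_right _ _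
        rcases huniq i g hwg with h3 | h3
        · exact i.property (by rw [← h3]; exact hgT)
        · exact hg i hi h3
      rw [hρa, hρb]
      exact Relation.ReflTransGen.single ⟨g, hgTs, hgends⟩
  have liftR : ∀ a b : V, Relation.ReflTransGen (G.AdjOn T) a b →
      Relation.ReflTransGen (G.AdjOn Tstar) (ρ a) (ρ b) := by
    intro a b h
    induction h with
    | refl => exact Relation.ReflTransGen.refl
    | tail _ hstep ih => exact ih.trans (lift _ _ hstep)
  have attach : ∀ u : V, Relation.ReflTransGen (G.AdjOn Tstar) u (ρ u) := by
    intro u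
    by_cases h : ∃ i : {e : E // e ∉ T}, σ i ≠ xE i ∧ u = wE i
    · obtain ⟨i, hsw, rfl⟩ := h
      rw [hρ_w i hsw]
      have step1 : G.AdjOn Tstar (wE i) (xE i) :=
        ⟨i.val, hival_not_M i hsw, hieds i⟩
      have path2 : Relation.ReflTransGen (G.AdjOn Tstar) (xE i) (yE i) := by
        have := liftR (xE i) (yE i) (hT2.2 _ _)
        rwa [hρ_x i, hρ_y i] at this
      exact (Relation.ReflTransGen.single step1).trans path2
    · push_neg at h
      rw [hρ_nw u h]
  have hconnTs : G.ConnOn Tstar := by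
    refine ⟨hT2.1, fun u v => ?_⟩
    exact (attach u).trans ((liftR u v (hT2.2 u v)).trans (G.rtg_symm (attach v)))
  -- Tstar is acyclic
  have hacyc : ¬ ∃ c, G.IsCycle c ∧ ∀ p ∈ c, p.2 ∈ Tstar := by
    rintro ⟨Z, hZ, hZTs⟩
    have hlen := hZ.2.2.1
    have hpos : 0 < Z.length := by omega
    have hedges : ∀ k : ℕ, cedg Z hpos k ∈ Tstar := by
      intro k
      have hmem : ((cvtx Z hpos (k % Z.length), cedg Z hpos (k % Z.length)) : V × E) ∈ Z :=
        (mem_cycle_iff hpos _).mpr ⟨k % Z.length, Nat.mod_lt _ hpos, rfl⟩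
      have := hZTs _ hmem
      simpa only [cedg_mod hpos k] using this
    refine hTnc ⟨Z, hZ, ?_⟩
    intro p hp
    by_contra hnT
    obtain ⟨m, hm, hpm⟩ := (mem_cycle_iff hpos p).mp hp
    have hp2 : p.2 = cedg Z hpos m := by rw [hpm]
    have hnT' : cedg Z hpos m ∉ T := hp2 ▸ hnT
    set i : {e : E // e ∉ T} := ⟨cedg Z hpos m, hnT'⟩ with hidef
    have hiv : (i : E) = cedg Z hpos m := rfl
    have hiTs : i.val ∈ Tstar := by rw [hiv]; exact hedges m
    have hsw : σ i ≠ xE i := by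
      intro hσx
      exact hiTs ⟨i, by simp only [hdropdef, if_pos hσx]⟩
    have heM : eE' i ∈ Mstar := hswap_mem i hsw
    -- wE i is a vertex of the cycle
    have hiw : wE i ∈ G.ends i.val := by rw [hieds i]; exact Sym2.mem_mk_left _ _
    have hieq : G.ends i.val = s(cvtx Z hpos m, cvtx Z hpos (m + 1)) := by
      rw [hiv]; exact cyc_rel hpos hZ m
    rw [hieq] at hiw
    have hfind : ∃ m' : ℕ, wE i = cvtx Z hpos m' := by
      rcases Sym2.mem_iff.mp hiw with h | h
      · exact ⟨m, h⟩
      · exact ⟨m + 1, h⟩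
    obtain ⟨m', hm'⟩ := hfind
    obtain ⟨hne2, hmem1, hmem2⟩ := cyc_two_edges_at hpos hZ m'
    rw [← hm'] at hmem1 hmem2
    have h1 := huniq i _ hmem1
    have h2 := huniq i _ hmem2
    have : eE' i = cedg Z hpos m' ∨ eE' i = cedg Z hpos (m' + Z.length - 1) := by
      rcases h1 with h1 | h1 <;> rcases h2 with h2 | h2
      · exact absurd (h1 ▸ h2.symm) hne2
      · exact Or.inr h2.symm
      · exact Or.inl h1.symm
      · exact Or.inl h1.symm
    rcases this with h | h
    · have := hedges m'
      rw [← h] at this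
      exact this heM
    · have := hedges (m' + Z.length - 1)
      rw [← h] at this
      exact this heM
  -- Mstar is a matching
  have hmatch : G.IsMatchingSet Mstar := by
    rintro e ⟨i, rfl⟩ f ⟨j, rfl⟩ hne v ⟨hv1, hv2⟩
    have hij : i ≠ j := fun h => hne (by rw [h])
    rw [hdropends i] at hv1
    rw [hdropends j] at hv2
    rcases Sym2.mem_iff.mp hv1 with h1 | h1 <;> rcases Sym2.mem_iff.mp hv2 with h2 | h2
    · exact hij (w_inj i j (by rw [← h1, ← h2]))
    · -- v = wE i, v = σ j
      rcases hσor j with h3 | h3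
      · exact hxW j i (by rw [← h3, ← h2, h1])
      · exact hyW j i (by rw [← h3, ← h2, h1])
    · rcases hσor i with h3 | h3
      · exact hxW i j (by rw [← h3, ← h1, h2])
      · exact hyW i j (by rw [← h3, ← h1, h2])
    · exact hij (hσinj (by rw [← h1, ← h2]))
  exact ⟨Tstar, Mstar, Set.compl_union_self _, disjoint_compl_left,
    ⟨hconnTs, hacyc⟩, hmatch⟩


end Endgame

section Main

/-- Main structural theorem: a finite connected loopless multigraph with maximum
degree at most 3 and no cycle all of whose vertices have degree 3 admits a
tree–matching decomposition. -/
theorem decomp_main (N : ℕ) : ∀ (V E : Type) [Finite V] [Finite E]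
    (G : Multigraph V E), Nat.card E ≤ N → G.Connected → (∀ v, G.deg v ≤ 3) →
    (¬ ∃ c, G.IsCycle c ∧ ∀ p ∈ c, G.deg p.1 = 3) → G.HasTM := by
  induction N with
  | zero =>
    intro V E _ _ G hcard hconn hdeg hno
    refine G.endgame hconn hdeg hno ?_
    rintro ⟨w, a, d₁, d₂, -, -, -, -⟩
    have hemp : IsEmpty E := by
      rcases Nat.card_eq_zero.mp (Nat.le_zero.mp hcard) with h | h
      · exact h
      · exact absurd h (not_infinite_iff_finite.mpr ‹Finite E›)
    exact hemp.elim d₁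
  | succ N ih =>
    intro V E _ _ G hcard hconn hdeg hno
    classical
    by_cases hspec : ∃ (w a : V) (d₁ d₂ : E), d₁ ≠ d₂ ∧ G.ends d₁ = s(w, a) ∧
        G.ends d₂ = s(w, a) ∧ G.deg w = 2
    swap
    · exact G.endgame hconn hdeg hno hspec
    obtain ⟨v, a, d₁, d₂, hd12, hvd₁, hvd₂, hdv2⟩ := hspec
    have hva : v ≠ a := G.ne_of_ends hvd₁
    have hav : a ≠ v := Ne.symm hva
    have hvmem1 : v ∈ G.ends d₁ := by rw [hvd₁]; exact Sym2.mem_mk_left _ _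
    have hvmem2 : v ∈ G.ends d₂ := by rw [hvd₂]; exact Sym2.mem_mk_left _ _
    have hamem1 : a ∈ G.ends d₁ := by rw [hvd₁]; exact Sym2.mem_mk_right _ _
    have hamem2 : a ∈ G.ends d₂ := by rw [hvd₂]; exact Sym2.mem_mk_right _ _
    have hv_edges : ∀ g : E, v ∈ G.ends g → g = d₁ ∨ g = d₂ := by
      obtain ⟨f, hfne, hfmem, huq⟩ := G.deg_two_structure hvmem1 hdv2
      have hfd : f = d₂ := by
        rcases huq d₂ hvmem2 with h | h
        · exact absurd h.symm hd12
        · exact h.symm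
      intro g hg
      rcases huq g hg with h | h
      · exact Or.inl h
      · exact Or.inr (h.trans hfd)
    have hda := G.deg_ge_two hamem1 hamem2 hd12
    have hda3 := hdeg a
    rcases Nat.lt_or_ge (G.deg a) 3 with ha2 | ha3
    · -- deg a = 2 : the whole graph is two vertices with two parallel edges
      have hda2 : G.deg a = 2 := by omega
      have ha_edges : ∀ g : E, a ∈ G.ends g → g = d₁ ∨ g = d₂ := by
        obtain ⟨f, hfne, hfmem, huq⟩ := G.deg_two_structure hamem1 hda2
        have hfd : f = d₂ := by
          rcases huq d₂ hamem2 with h | h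
          · exact absurd h.symm hd12
          · exact h.symm
        intro g hg
        rcases huq g hg with h | h
        · exact Or.inl h
        · exact Or.inr (h.trans hfd)
      have hVC : ∀ u : V, u = v ∨ u = a := by
        intro u
        refine G.closed_set (S := Set.univ) (C := {x | x = v ∨ x = a}) ?_
          (hconn.2 v u) (Or.inl rfl)
        intro g _ p q hpq hp
        have hqm : q ∈ G.ends g := by rw [hpq]; exact Sym2.mem_mk_right _ _
        rcases hp with hp | hp
        · have hvg : v ∈ G.ends g := by rw [hpq, ← hp]; exact Sym2.mem_mk_left _ _
          rcases hv_edges g hvg with h | h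
          · rw [h, hvd₁] at hqm; exact Sym2.mem_iff.mp hqm
          · rw [h, hvd₂] at hqm; exact Sym2.mem_iff.mp hqm
        · have hag : a ∈ G.ends g := by rw [hpq, ← hp]; exact Sym2.mem_mk_left _ _
          rcases ha_edges g hag with h | h
          · rw [h, hvd₁] at hqm; exact Sym2.mem_iff.mp hqm
          · rw [h, hvd₂] at hqm; exact Sym2.mem_iff.mp hqm
      refine ⟨{d₁}, {e | e ≠ d₁}, ?_, ?_, ⟨⟨hconn.1, ?_⟩, ?_⟩, ?_⟩
      · ext e
        simp only [Set.mem_union, Set.mem_singleton_iff, Set.mem_setOf_eq,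
          Set.mem_univ, iff_true]
        exact em (e = d₁)
      · rw [Set.disjoint_left]
        rintro e he1 he2
        exact he2 he1
      · intro u w
        have hstep : Relation.ReflTransGen (G.AdjOn {d₁}) v a :=
          Relation.ReflTransGen.single ⟨d₁, rfl, hvd₁⟩
        have key : ∀ u : V, Relation.ReflTransGen (G.AdjOn {d₁}) v u := by
          intro u
          rcases hVC u with h | h
          · rw [h]
          · rw [h]; exact hstep
        exact (G.rtg_symm (key u)).trans (key w)
      · rintro ⟨Z, hZ, hZT⟩
        have hlen := hZ.2.2.1
        have hpos : 0 < Z.length := by omega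
        have h0 : cedg Z hpos 0 ∈ ({d₁} : Set E) :=
          hZT _ ((mem_cycle_iff hpos _).mpr ⟨0, hpos, rfl⟩)
        have h1 : cedg Z hpos 1 ∈ ({d₁} : Set E) :=
          hZT _ ((mem_cycle_iff hpos _).mpr ⟨1, by omega, rfl⟩)
        have : cedg Z hpos 0 = cedg Z hpos 1 := by
          rw [Set.mem_singleton_iff.mp h0, Set.mem_singleton_iff.mp h1]
        have hmod := cedg_inj hpos hZ this
        rw [Nat.zero_mod, Nat.mod_eq_of_lt (by omega)] at hmod
        omega
      · rintro e he f hf hnef u ⟨hu1, hu2⟩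
        -- every edge is d₁ or d₂
        have hEC : ∀ g : E, g = d₁ ∨ g = d₂ := by
          intro g
          obtain ⟨p, q, hpq, hpqne⟩ := G.ends_eq g
          have hpm : p ∈ G.ends g := by rw [hpq]; exact Sym2.mem_mk_left _ _
          rcases hVC p with hp | hp
          · exact hv_edges g (hp ▸ hpm)
          · exact ha_edges g (hp ▸ hpm)
        have he' : e = d₂ := (hEC e).resolve_left he
        have hf' : f = d₂ := (hEC f).resolve_left hf
        exact hnef (he'.trans hf'.symm)
    · -- deg a = 3 : suppress the spectacle
      have hthird : ∃ g : E, a ∈ G.ends g ∧ g ≠ d₁ ∧ g ≠ d₂ := by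
        by_contra hcon
        push_neg at hcon
        have hsub : G.inc a ⊆ {d₁, d₂} := by
          intro g hg
          by_cases h : g = d₁
          · exact Or.inl h
          · exact Or.inr (hcon g hg h)
        have hle : G.deg a ≤ 2 := by
          rw [deg_eq_ncard]
          calc (G.inc a).ncard ≤ ({d₁, d₂} : Set E).ncard :=
                Set.ncard_le_ncard hsub (Set.toFinite _)
            _ = 2 := Set.ncard_pair hd12
        omega
      obtain ⟨g₃, hag₃, hg₃1, hg₃2⟩ := hthird
      have ha_edges : ∀ g : E, a ∈ G.ends g → g = d₁ ∨ g = d₂ ∨ g = g₃ :=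
        G.deg_three_structure hamem1 hamem2 hag₃ hd12 (Ne.symm hg₃1) (Ne.symm hg₃2) hda3
      have hvnot : ∀ g : E, g ≠ d₁ → g ≠ d₂ → v ∉ G.ends g := by
        intro g h1 h2 hmem
        rcases hv_edges g hmem with h | h
        exacts [h1 h, h2 h]
      -- construct H
      set r : V → {x : V // x ≠ v} := fun x => if h : x = v then ⟨a, hav⟩ else ⟨x, h⟩
        with hrdef
      have hrv : r v = ⟨a, hav⟩ := by simp [hrdef]
      have hrx : ∀ (x : V) (h : x ≠ v), r x = ⟨x, h⟩ := by
        intro x h; simp [hrdef, h]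
      have hloop : ∀ (e : {e : E // e ≠ d₁ ∧ e ≠ d₂}), ¬ ((G.ends e.val).map r).IsDiag := by
        rintro ⟨e, h1, h2⟩ hdiag
        obtain ⟨x, y, hxy, hxyne⟩ := G.ends_eq e
        have hxv : x ≠ v := by
          intro h
          exact hvnot e h1 h2 (by rw [hxy, ← h]; exact Sym2.mem_mk_left _ _)
        have hyv : y ≠ v := by
          intro h
          exact hvnot e h1 h2 (by rw [hxy, ← h]; exact Sym2.mem_mk_right _ _)
        rw [hxy, Sym2.map_pair_eq, hrx x hxv, hrx y hyv] at hdiag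
        exact hxyne (congrArg Subtype.val (Sym2.mk_isDiag_iff.mp hdiag))
      set H : Multigraph {x : V // x ≠ v} {e : E // e ≠ d₁ ∧ e ≠ d₂} :=
        ⟨fun e => (G.ends e.val).map r, hloop⟩ with hHdef
      have hfwd : ∀ (e : {e : E // e ≠ d₁ ∧ e ≠ d₂}) (x y : V), G.ends e.val = s(x, y) →
          H.ends e = s(r x, r y) := by
        intro e x y h
        show (G.ends e.val).map r = _
        rw [h, Sym2.map_pair_eq]
      have hbwd : ∀ (e : {e : E // e ≠ d₁ ∧ e ≠ d₂}) (p q : {x : V // x ≠ v}),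
          H.ends e = s(p, q) → G.ends e.val = s(p.val, q.val) := by
        intro e p q h
        obtain ⟨x, y, hxy, hxyne⟩ := G.ends_eq e.val
        have hxv : x ≠ v := by
          intro hh
          exact hvnot e.val e.2.1 e.2.2 (by rw [hxy, ← hh]; exact Sym2.mem_mk_left _ _)
        have hyv : y ≠ v := by
          intro hh
          exact hvnot e.val e.2.1 e.2.2 (by rw [hxy, ← hh]; exact Sym2.mem_mk_right _ _)
        rw [hfwd e x y hxy, hrx x hxv, hrx y hyv] at h
        rcases Sym2.eq_iff.mp h with ⟨h1, h2⟩ | ⟨h1, h2⟩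
        · rw [hxy, ← h1, ← h2]
        · rw [hxy, ← h1, ← h2, Sym2.eq_swap]
      have hmemH : ∀ (e : {e : E // e ≠ d₁ ∧ e ≠ d₂}) (x : V) (hx : x ≠ v),
          (x ∈ G.ends e.val ↔ (⟨x, hx⟩ : {x : V // x ≠ v}) ∈ H.ends e) := by
        intro e x hx
        constructor
        · intro h
          show _ ∈ Sym2.map r _
          rw [Sym2.mem_map]
          exact ⟨x, h, hrx x hx⟩
        · intro h
          rw [show H.ends e = Sym2.map r (G.ends e.val) from rfl, Sym2.mem_map] at h
          obtain ⟨z, hz, hzr⟩ := h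
          have hzv : z ≠ v := fun hzv => hvnot e.val e.2.1 e.2.2 (hzv ▸ hz)
          rw [hrx z hzv] at hzr
          have hzx : z = x := congrArg Subtype.val hzr
          exact hzx ▸ hz
      have hr_id : ∀ p : {x : V // x ≠ v}, r p.val = p :=
        fun p => (hrx p.val p.2).trans (Subtype.ext rfl)
      have hHconn : H.Connected := by
        refine ⟨⟨⟨a, hav⟩⟩, fun p q => ?_⟩
        have liftG : ∀ u w : V, Relation.ReflTransGen (G.AdjOn Set.univ) u w →
            Relation.ReflTransGen (H.AdjOn Set.univ) (r u) (r w) := by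
          intro u w h
          induction h with
          | refl => exact Relation.ReflTransGen.refl
          | @tail b c _ hstep ihh =>
            refine ihh.trans ?_
            obtain ⟨g, -, hends⟩ := hstep
            by_cases hgd : g = d₁ ∨ g = d₂
            · have hends' : s(v, a) = s(b, c) := by
                rw [← hends]
                rcases hgd with rfl | rfl
                exacts [hvd₁.symm, hvd₂.symm]
              rcases Sym2.eq_iff.mp hends' with ⟨h1, h2⟩ | ⟨h1, h2⟩
              · rw [← h1, ← h2, hrv, hrx a hav]
              · rw [← h1, ← h2, hrv, hrx a hav]
            · push_neg at hgd
              exact Relation.ReflTransGen.single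
                ⟨⟨g, hgd.1, hgd.2⟩, Set.mem_univ _, hfwd ⟨g, hgd.1, hgd.2⟩ _ _ hends⟩
        have h1 := liftG p.val q.val (hconn.2 _ _)
        rwa [hr_id p, hr_id q] at h1
      have hdegH_le : ∀ p : {x : V // x ≠ v}, H.deg p ≤ G.deg p.val := by
        intro p
        refine Nat.card_le_card_of_injective
          (fun x => ⟨x.val.val, (hmemH x.val p.val p.2).mpr x.2⟩) ?_
        intro x y hxy
        have h1 := Subtype.ext_iff.mp hxy
        exact Subtype.ext (Subtype.ext h1)
      have hHdeg : ∀ p : {x : V // x ≠ v}, H.deg p ≤ 3 :=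
        fun p => le_trans (hdegH_le p) (hdeg p.val)
      have hHno : ¬ ∃ c, H.IsCycle c ∧ ∀ p ∈ c, H.deg p.1 = 3 := by
        rintro ⟨c', hc', hall⟩
        obtain ⟨hn1, hn2, hlen, hrel⟩ := hc'
        set f : {x : V // x ≠ v} × {e : E // e ≠ d₁ ∧ e ≠ d₂} → V × E :=
          fun p => (p.1.val, p.2.val) with hfdef
        refine hno ⟨c'.map f, ⟨?_, ?_, ?_, ?_⟩, ?_⟩
        · rw [List.map_map]
          have heq : (Prod.fst ∘ f) = (Subtype.val ∘ Prod.fst) := rfl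
          rw [heq, ← List.map_map]
          exact hn1.map (fun x y h => Subtype.ext h)
        · rw [List.map_map]
          have heq : (Prod.snd ∘ f) = (Subtype.val ∘ Prod.snd) := rfl
          rw [heq, ← List.map_map]
          exact hn2.map (fun x y h => Subtype.ext h)
        · rw [List.length_map]; exact hlen
        · intro i
          have hL : (c'.map f).length = c'.length := List.length_map _
          have hi : (i : ℕ) < c'.length := by rw [← hL]; exact i.isLt
          have hpc : 0 < c'.length := by omega
          have hii : (((i : ℕ) + 1) % (c'.map f).length) < c'.length := by
            rw [← hL]; exact Nat.mod_lt _ i.pos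
          have hg1 : (c'.map f).get i = f (c'.get ⟨i, hi⟩) := by simp only [List.get_eq_getElem, List.getElem_map]
          have hg2 : (c'.map f).get ⟨((i : ℕ) + 1) % (c'.map f).length,
              Nat.mod_lt _ i.pos⟩ = f (c'.get ⟨((i : ℕ) + 1) % (c'.map f).length, hii⟩) :=
            by simp only [List.get_eq_getElem, List.getElem_map]
          have hidx : (((i : ℕ) + 1) % (c'.map f).length) = (((i : ℕ) + 1) % c'.length) :=
            congrArg (fun n => ((i : ℕ) + 1) % n) hL
          have hgeq : c'.get ⟨((i : ℕ) + 1) % (c'.map f).length, hii⟩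
              = c'.get ⟨((i : ℕ) + 1) % c'.length, Nat.mod_lt _ hpc⟩ := by
            congr 1
            exact Fin.ext hidx
          rw [hg1, hg2, hgeq]
          exact hbwd (c'.get ⟨i, hi⟩).2 (c'.get ⟨i, hi⟩).1
            (c'.get ⟨((i : ℕ) + 1) % c'.length, Nat.mod_lt _ hpc⟩).1 (hrel ⟨i, hi⟩)
        · intro p hp
          rw [List.mem_map] at hp
          obtain ⟨q, hq, rfl⟩ := hp
          have h3 := hall q hq
          have hle := hdegH_le q.1
          have hd := hdeg q.1.val
          show G.deg q.1.val = 3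
          omega
      have hcard' : Nat.card {e : E // e ≠ d₁ ∧ e ≠ d₂} ≤ N := by
        haveI : Fintype E := Fintype.ofFinite E
        have h1 : Nat.card {e : E // e ≠ d₁ ∧ e ≠ d₂} < Nat.card E := by
          rw [Nat.card_eq_fintype_card, Nat.card_eq_fintype_card]
          exact Fintype.card_subtype_lt (x := d₁) (by simp)
        omega
      obtain ⟨T', M', hTMu, hTMd, ⟨hT'conn, hT'nc⟩, hM'match⟩ :=
        ih _ _ H hcard' hHconn hHdeg hHno
      -- g₃ is forced into T'
      have ha_edgesH : ∀ e : {e : E // e ≠ d₁ ∧ e ≠ d₂},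
          (⟨a, hav⟩ : {x : V // x ≠ v}) ∈ H.ends e → e = ⟨g₃, hg₃1, hg₃2⟩ := by
        intro e he
        have hae : a ∈ G.ends e.val := (hmemH e a hav).mpr he
        rcases ha_edges e.val hae with h | h | h
        · exact absurd h e.2.1
        · exact absurd h e.2.2
        · exact Subtype.ext h
      obtain ⟨z₃, hz₃ends, hz₃a⟩ := G.other_end hag₃
      have hz₃v : z₃ ≠ v := by
        intro h
        exact hvnot g₃ hg₃1 hg₃2 (by rw [hz₃ends, ← h]; exact Sym2.mem_mk_right _ _)
      have hg₃T' : (⟨g₃, hg₃1, hg₃2⟩ : {e : E // e ≠ d₁ ∧ e ≠ d₂}) ∈ T' := by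
        have hrtg := hT'conn.2 ⟨a, hav⟩ ⟨z₃, hz₃v⟩
        rcases Relation.ReflTransGen.cases_head hrtg with heq | ⟨b, ⟨e, heT', hends⟩, -⟩
        · exact absurd (congrArg Subtype.val heq).symm hz₃a
        · have hea : (⟨a, hav⟩ : {x : V // x ≠ v}) ∈ H.ends e := by
            rw [hends]; exact Sym2.mem_mk_left _ _
          rw [← ha_edgesH e hea]
          exact heT'
      -- lifted decomposition
      refine ⟨{e : E | e = d₁ ∨ ∃ h : e ≠ d₁ ∧ e ≠ d₂, (⟨e, h⟩ : _) ∈ T'},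
        {e : E | e = d₂ ∨ ∃ h : e ≠ d₁ ∧ e ≠ d₂, (⟨e, h⟩ : _) ∈ M'},
        ?_, ?_, ⟨⟨hconn.1, ?_⟩, ?_⟩, ?_⟩
      · ext e
        simp only [Set.mem_union, Set.mem_setOf_eq, Set.mem_univ, iff_true]
        by_cases h1 : e = d₁
        · exact Or.inl (Or.inl h1)
        by_cases h2 : e = d₂
        · exact Or.inr (Or.inl h2)
        have hmem : (⟨e, h1, h2⟩ : {e : E // e ≠ d₁ ∧ e ≠ d₂}) ∈ T' ∪ M' := by
          rw [hTMu]; trivial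
        rcases hmem with h | h
        · exact Or.inl (Or.inr ⟨⟨h1, h2⟩, h⟩)
        · exact Or.inr (Or.inr ⟨⟨h1, h2⟩, h⟩)
      · rw [Set.disjoint_left]
        rintro e (he | ⟨h1, he⟩) hf
        · rcases hf with hf | ⟨h2, -⟩
          · exact hd12 (he.symm.trans hf)
          · exact h2.1 he
        · rcases hf with hf | ⟨h2, hf⟩
          · exact h1.2 hf
          · exact Set.disjoint_left.mp hTMd he hf
      · -- connectivity of lifted tree
        have hstepH : ∀ p q : {x : V // x ≠ v}, H.AdjOn T' p q →
            G.AdjOn {e : E | e = d₁ ∨ ∃ h : e ≠ d₁ ∧ e ≠ d₂, (⟨e, h⟩ : _) ∈ T'}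
              p.val q.val := by
          rintro p q ⟨e, heT, hends⟩
          exact ⟨e.val, Or.inr ⟨e.2, heT⟩, hbwd e p q hends⟩
        have hRTG : ∀ p q : {x : V // x ≠ v}, Relation.ReflTransGen (H.AdjOn T') p q →
            Relation.ReflTransGen
              (G.AdjOn {e : E | e = d₁ ∨ ∃ h : e ≠ d₁ ∧ e ≠ d₂, (⟨e, h⟩ : _) ∈ T'})
              p.val q.val := by
          intro p q h
          induction h with
          | refl => exact Relation.ReflTransGen.refl
          | tail _ hstep ihh => exact ihh.tail (hstepH _ _ hstep)
        have hattach : ∀ u : V, Relation.ReflTransGen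
            (G.AdjOn {e : E | e = d₁ ∨ ∃ h : e ≠ d₁ ∧ e ≠ d₂, (⟨e, h⟩ : _) ∈ T'})
            u ((r u).val) := by
          intro u
          by_cases h : u = v
          · subst h
            rw [hrv]
            exact Relation.ReflTransGen.single ⟨d₁, Or.inl rfl, hvd₁⟩
          · rw [hrx u h]
        intro u w
        have h1 := hRTG (r u) (r w) (hT'conn.2 _ _)
        exact ((hattach u).trans h1).trans (G.rtg_symm (hattach w))
      · -- no cycle in lifted tree
        rintro ⟨Z, hZ, hZT⟩
        have hlenZ := hZ.2.2.1
        have hpos : 0 < Z.length := by omega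
        have hZedge : ∀ k : ℕ, cedg Z hpos k ∈
            {e : E | e = d₁ ∨ ∃ h : e ≠ d₁ ∧ e ≠ d₂, (⟨e, h⟩ : _) ∈ T'} := by
          intro k
          have hmem : ((cvtx Z hpos (k % Z.length), cedg Z hpos (k % Z.length)) : V × E) ∈ Z :=
            (mem_cycle_iff hpos _).mpr ⟨k % Z.length, Nat.mod_lt _ hpos, rfl⟩
          have := hZT _ hmem
          simpa only [cedg_mod hpos k] using this
        have hd₂Tl : d₂ ∉ {e : E | e = d₁ ∨ ∃ h : e ≠ d₁ ∧ e ≠ d₂, (⟨e, h⟩ : _) ∈ T'} := by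
          rintro (h | ⟨h, -⟩)
          · exact hd12 h.symm
          · exact h.2 rfl
        have hvnotZ : ∀ m : ℕ, cvtx Z hpos m ≠ v := by
          intro m hm
          obtain ⟨hne2, hm1, hm2⟩ := cyc_two_edges_at hpos hZ m
          rw [hm] at hm1 hm2
          have hA := hv_edges _ hm1
          have hB := hv_edges _ hm2
          rcases hA with hA | hA
          · rcases hB with hB | hB
            · exact hne2 (hA.trans hB.symm)
            · exact hd₂Tl (hB ▸ hZedge (m + Z.length - 1))
          · exact hd₂Tl (hA ▸ hZedge m)
        have hZp1 : ∀ p, p ∈ Z → p.1 ≠ v := by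
          intro p hp
          obtain ⟨m, hm, rfl⟩ := (mem_cycle_iff hpos p).mp hp
          exact hvnotZ m
        have hZp2 : ∀ p, p ∈ Z → p.2 ≠ d₁ ∧ p.2 ≠ d₂ := by
          intro p hp
          obtain ⟨m, hm, rfl⟩ := (mem_cycle_iff hpos p).mp hp
          constructor
          · intro h
            have h' : cedg Z hpos m = d₁ := h
            have hvmem : v ∈ G.ends (cedg Z hpos m) := by rw [h']; exact hvmem1
            rw [cyc_rel hpos hZ m] at hvmem
            rcases Sym2.mem_iff.mp hvmem with h'' | h''
            · exact hvnotZ m h''.symm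
            · exact hvnotZ (m + 1) h''.symm
          · intro h
            have h' : cedg Z hpos m = d₂ := h
            have hvmem : v ∈ G.ends (cedg Z hpos m) := by rw [h']; exact hvmem2
            rw [cyc_rel hpos hZ m] at hvmem
            rcases Sym2.mem_iff.mp hvmem with h'' | h''
            · exact hvnotZ m h''.symm
            · exact hvnotZ (m + 1) h''.symm
        -- build the H-cycle
        set FF : {p : V × E // p ∈ Z} → {x : V // x ≠ v} × {e : E // e ≠ d₁ ∧ e ≠ d₂} :=
          fun x => (⟨x.val.1, hZp1 x.val x.2⟩, ⟨x.val.2, hZp2 x.val x.2⟩) with hFFdef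
        set c' := Z.attach.map FF with hc'def
        have hlenc' : c'.length = Z.length := by
          rw [hc'def, List.length_map, List.length_attach]
        have hval1 : (c'.map Prod.fst).map Subtype.val = Z.map Prod.fst := by
          rw [hc'def, List.map_map, List.map_map]
          exact List.attach_map_val (l := Z) (f := fun p => p.1)
        have hval2 : (c'.map Prod.snd).map Subtype.val = Z.map Prod.snd := by
          rw [hc'def, List.map_map, List.map_map]
          exact List.attach_map_val (l := Z) (f := fun p => p.2)
        have hgetc' : ∀ (i : ℕ) (h : i < c'.length),
            ((c'.get ⟨i, h⟩).1.val = (Z.get ⟨i, by rwa [← hlenc']⟩).1 ∧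
             (c'.get ⟨i, h⟩).2.val = (Z.get ⟨i, by rwa [← hlenc']⟩).2) := by
          intro i h
          have h2 : i < Z.attach.length := by rw [List.length_attach]; rwa [← hlenc']
          have hg : c'.get ⟨i, h⟩ = FF (Z.attach.get ⟨i, h2⟩) := by simp only [List.get_eq_getElem]; exact List.getElem_map FF
          rw [hg]
          constructor
          · show (Z.attach.get ⟨i, h2⟩).val.1 = _
            rw [List.get_attach]
          · show (Z.attach.get ⟨i, h2⟩).val.2 = _
            rw [List.get_attach]
        refine hT'nc ⟨c', ⟨?_, ?_, ?_, ?_⟩, ?_⟩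
        · exact List.Nodup.of_map Subtype.val (by rw [hval1]; exact hZ.1)
        · exact List.Nodup.of_map Subtype.val (by rw [hval2]; exact hZ.2.1)
        · rw [hlenc']; exact hlenZ
        · intro i
          have hi : (i : ℕ) < Z.length := by rw [← hlenc']; exact i.isLt
          obtain ⟨hv1, he1⟩ := hgetc' i i.isLt
          obtain ⟨hv2, he2⟩ := hgetc' (((i : ℕ) + 1) % c'.length) (Nat.mod_lt _ i.pos)
          have hmain : G.ends ((c'.get i).2).val =
              s(((c'.get i).1).val,
                ((c'.get ⟨((i : ℕ) + 1) % c'.length, Nat.mod_lt _ i.pos⟩).1).val) := by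
            rw [he1, hv1, hv2]
            have h0 := hZ.2.2.2 ⟨(i : ℕ), hi⟩
            have hidx : ((i : ℕ) + 1) % c'.length = ((i : ℕ) + 1) % Z.length :=
              congrArg (fun n => ((i : ℕ) + 1) % n) hlenc'
            have hgeq : Z.get ⟨((i : ℕ) + 1) % c'.length, by rw [hidx]; exact Nat.mod_lt _ hpos⟩
                = Z.get ⟨((i : ℕ) + 1) % Z.length, Nat.mod_lt _ hpos⟩ := by
              congr 1
              exact Fin.ext hidx
            rw [hgeq]
            exact h0
          show (G.ends ((c'.get i).2).val).map r = _
          rw [hmain, Sym2.map_pair_eq, hrx _ ((c'.get i).1).2,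
            hrx _ ((c'.get ⟨((i : ℕ) + 1) % c'.length, Nat.mod_lt _ i.pos⟩).1).2]
        · intro p hp
          rw [hc'def, List.mem_map] at hp
          obtain ⟨x, hx, rfl⟩ := hp
          have hxZ := hZT x.val x.2
          rcases hxZ with h | ⟨h, hmem⟩
          · exact absurd h (hZp2 x.val x.2).1
          · exact hmem
      · rintro e he f hf hne u ⟨hu1, hu2⟩
        rcases he with he | ⟨h1, he⟩
        · rcases hf with hf | ⟨h2, hf⟩
          · exact hne (he.trans hf.symm)
          · rw [he, hvd₂] at hu1
            rcases Sym2.mem_iff.mp hu1 with h | h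
            · exact hvnot f h2.1 h2.2 (h ▸ hu2)
            · rcases ha_edges f (h ▸ hu2) with hh | hh | hh
              · exact h2.1 hh
              · exact h2.2 hh
              · refine Set.disjoint_left.mp hTMd hg₃T' ?_
                have heq : (⟨f, h2⟩ : {e : E // e ≠ d₁ ∧ e ≠ d₂}) = ⟨g₃, hg₃1, hg₃2⟩ :=
                  Subtype.ext hh
                rw [← heq]
                exact hf
        · rcases hf with hf | ⟨h2, hf⟩
          · rw [hf, hvd₂] at hu2
            rcases Sym2.mem_iff.mp hu2 with h | h
            · exact hvnot e h1.1 h1.2 (h ▸ hu1)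
            · rcases ha_edges e (h ▸ hu1) with hh | hh | hh
              · exact h1.1 hh
              · exact h1.2 hh
              · refine Set.disjoint_left.mp hTMd hg₃T' ?_
                have heq : (⟨e, h1⟩ : {e : E // e ≠ d₁ ∧ e ≠ d₂}) = ⟨g₃, hg₃1, hg₃2⟩ :=
                  Subtype.ext hh
                rw [← heq]
                exact he
          · have huv : u ≠ v := by
              intro h
              exact hvnot e h1.1 h1.2 (h ▸ hu1)
            exact hM'match _ he _ hf
              (fun h => hne (congrArg Subtype.val h)) ⟨u, huv⟩
              ⟨(hmemH ⟨e, h1⟩ u huv).mp hu1, (hmemH ⟨f, h2⟩ u huv).mp hu2⟩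

end Main

end Multigraph

open Multigraph in
/-- A minimum counterexample in `S_{1,3}` to the
2-Decomposition Conjecture contains a cycle all of whose vertices have
degree 3. -/
theorem stmt_16 {V E : Type} [Finite V] [Finite E] (G : Multigraph V E)
    (hG : G.MinCex) :
    ∃ c : List (V × E), G.IsCycle c ∧ ∀ p ∈ c, G.deg p.1 = 3 := by
  by_contra hno
  exact hG.2.1 (decomp_main (Nat.card E) V E G le_rfl hG.1.1
    (fun v => (hG.1.2.1 v).2) hno)
end
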